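/- arXiv:1204.4635 — 2 statements merged into one kernel-verified Lean document; each statement's English description precedes it below -/
import Mathlib

section
/- Let V be a finite-dimensional vector space over a field F and A a nilpotent endomorphism of V. Then there exist vectors z_1,...,z_r in V such that V decomposes as a direct sum of the cyclic F[A]-submodules F[A]·z_k, and the lengths q_k = dim F[A]·z_k, arranged in decreasing order, form the Jordan type of A. -/
/-- `P` is the Jordan type of the nilpotent endomorphism `A`: a weakly decreasing
list of positive integers such that for every `m`, the number of boxes in the first
`m` columns of `P` equals `dim ker A^m`. -/
def IsJordanType (F V : Type*) [Field F] [AddCommGroup V] [Module F V]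
    (A : Module.End F V) (P : List ℕ) : Prop :=
  P.Pairwise (· ≥ ·) ∧ (∀ p ∈ P, 0 < p) ∧
    ∀ m : ℕ, (P.map (fun p => min p m)).sum =
      Module.finrank F ↥(LinearMap.ker (A ^ m))

/-- The cyclic `F[A]`-submodule generated by `z`: the span of `z, A z, A² z, …`. -/
def cyclicSub (F V : Type*) [Field F] [AddCommGroup V] [Module F V]
    (A : Module.End F V) (z : V) : Submodule F V :=
  Submodule.span F (Set.range fun j : ℕ => (A ^ j) z)

open Module Submodule

universe u

section Aux

variable {F : Type*} [Field F]

private lemma key_trivial (V : Type u) [AddCommGroup V] [Module F V]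
    [Subsingleton V] (A : Module.End F V) :
    ∃ (ι : Type) (_ : Fintype ι) (q : ι → ℕ) (z : ι → V),
      (∀ k, 0 < q k) ∧ (∀ k, (A ^ q k) (z k) = 0) ∧
      LinearIndependent F (fun p : Σ k : ι, Fin (q k) => (A ^ (p.2 : ℕ)) (z p.1)) ∧
      Submodule.span F (Set.range fun p : Σ k : ι, Fin (q k) => (A ^ (p.2 : ℕ)) (z p.1)) = ⊤ := by
  refine ⟨Empty, inferInstance, fun _ => 1, fun k => k.elim, fun k => one_pos,
    fun k => k.elim, ?_, ?_⟩
  · haveI : IsEmpty (Σ k : Empty, Fin 1) := ⟨fun p => p.1.elim⟩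
    exact linearIndependent_empty_type
  · exact Subsingleton.elim _ _

private lemma key_ind (n : ℕ) :
    ∀ (V : Type u) [AddCommGroup V] [Module F V] [FiniteDimensional F V]
      (A : Module.End F V), IsNilpotent A → Module.finrank F V ≤ n →
    ∃ (ι : Type) (_ : Fintype ι) (q : ι → ℕ) (z : ι → V),
      (∀ k, 0 < q k) ∧ (∀ k, (A ^ q k) (z k) = 0) ∧
      LinearIndependent F (fun p : Σ k : ι, Fin (q k) => (A ^ (p.2 : ℕ)) (z p.1)) ∧
      Submodule.span F (Set.range fun p : Σ k : ι, Fin (q k) => (A ^ (p.2 : ℕ)) (z p.1)) = ⊤ := by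
  induction n with
  | zero =>
    intro V _ _ _ A hA hle
    haveI : Subsingleton V := (Module.finrank_zero_iff (R := F)).mp (Nat.le_zero.mp hle)
    exact key_trivial V A
  | succ n IH =>
    intro V _ _ _ A hA hle
    rcases subsingleton_or_nontrivial V with h | h
    · exact key_trivial V A
    obtain ⟨N, hN⟩ := hA
    set W := LinearMap.range A with hWdef
    -- W ≠ ⊤
    have hne : W ≠ ⊤ := by
      intro htop
      have hsurj : Function.Surjective A := LinearMap.range_eq_top.mp htop
      have hsurjpow : ∀ m : ℕ, Function.Surjective ((A ^ m : Module.End F V)) := by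
        intro m
        induction m with
        | zero => exact fun y => ⟨y, rfl⟩
        | succ m ih =>
          intro y
          obtain ⟨x, hx⟩ := ih y
          obtain ⟨x', hx'⟩ := hsurj x
          exact ⟨x', by rw [pow_succ, Module.End.mul_apply, hx', hx]⟩
      obtain ⟨x, hx0⟩ := exists_ne (0 : V)
      obtain ⟨y, hy⟩ := hsurjpow N x
      rw [hN, LinearMap.zero_apply] at hy
      exact hx0 hy.symm
    have hWlt : finrank F W < finrank F V :=
      Submodule.finrank_lt hne
    have hinv : ∀ x ∈ W, A x ∈ W := fun x _ => LinearMap.mem_range_self A x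
    set A' : Module.End F W := A.restrict hinv with hA'def
    have hcoe : ∀ (m : ℕ) (x : W), (((A' ^ m) x : W) : V) = (A ^ m) (x : V) := by
      intro m
      induction m with
      | zero => intro x; simp
      | succ m ih =>
        intro x
        have h1 : (((A' ^ (m + 1)) x : W) : V) = A (((A' ^ m) x : W) : V) := by
          rw [pow_succ', Module.End.mul_apply]; rfl
        rw [h1, ih, ← Module.End.mul_apply, ← pow_succ']
    have hA' : IsNilpotent A' := by
      refine ⟨N, LinearMap.ext fun x => Subtype.ext ?_⟩
      rw [hcoe, hN]
      simp
    obtain ⟨ι, _, q, w, hqpos, hq0, hindep, hspan⟩ :=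
      IH W A' hA' (by omega)
    have hzex : ∀ k, ∃ x : V, A x = (w k : V) := fun k => (w k).2
    choose z hz using hzex
    have hAz : ∀ (k : ι) (j : ℕ), (A ^ (j + 1)) (z k) = (A ^ j) ((w k : V)) := by
      intro k j
      rw [pow_succ, Module.End.mul_apply, hz]
    -- independence of the image family in V
    have hindepV : LinearIndependent F
        (fun p : Σ k : ι, Fin (q k) => (A ^ (p.2 : ℕ)) ((w p.1 : V))) := by
      have h1 := hindep.map' W.subtype (Submodule.ker_subtype W)
      have heq : (fun p : Σ k : ι, Fin (q k) => (A ^ (p.2 : ℕ)) ((w p.1 : V))) =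
          W.subtype ∘ (fun p : Σ k : ι, Fin (q k) => (A' ^ (p.2 : ℕ)) (w p.1)) :=
        funext fun p => (hcoe _ _).symm
      rw [heq]
      exact h1
    have hvw : ∀ k, (A ^ q k) (z k) = (A ^ (q k - 1)) ((w k : V)) := by
      intro k
      conv_lhs => rw [show q k = (q k - 1) + 1 from by have := hqpos k; omega]
      exact hAz k _
    have hvK : ∀ k, (A ^ q k) (z k) ∈ LinearMap.ker A := by
      intro k
      rw [LinearMap.mem_ker, ← Module.End.mul_apply, ← pow_succ', hAz, ← hcoe, hq0]
      simp
    set K := LinearMap.ker A with hKdef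
    set vK : ι → K := fun k => ⟨(A ^ q k) (z k), hvK k⟩ with hvKdef
    have hvindep : LinearIndependent F vK := by
      apply LinearIndependent.of_comp K.subtype
      have heq : K.subtype ∘ vK = fun k : ι => (A ^ (q k - 1)) ((w k : V)) :=
        funext fun k => hvw k
      rw [heq]
      exact hindepV.comp
        (fun k : ι => (⟨k, ⟨q k - 1, by have := hqpos k; omega⟩⟩ : Σ k : ι, Fin (q k)))
        (fun a b hab => (Sigma.mk.inj_iff.mp hab).1)
    set S : Submodule F K := Submodule.span F (Set.range vK) with hSdef
    obtain ⟨C, hC⟩ := Submodule.exists_isCompl S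
    set s := finrank F C with hsdef
    set uB := Module.finBasis F C with huBdef
    set u : Fin s → V := fun i => ((uB i : K) : V) with hudef
    have hu0 : ∀ i, A (u i) = 0 := fun i => (uB i : K).2
    -- the new family
    refine ⟨ι ⊕ Fin s, inferInstance, Sum.elim (fun k => q k + 1) (fun _ => 1),
      Sum.elim z u, ?_, ?_, ?_, ?_⟩
    · rintro (k | i) <;> simp
    · rintro (k | i)
      · show (A ^ (q k + 1)) (z k) = 0
        rw [hAz, ← hcoe, hq0]
        simp
      · show (A ^ 1) (u i) = 0
        simpa using hu0 i
    all_goals {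
      set q' : ι ⊕ Fin s → ℕ := Sum.elim (fun k => q k + 1) (fun _ => 1) with hq'def
      set B' : (Σ k : ι ⊕ Fin s, Fin (q' k)) → V :=
        fun p => (A ^ (p.2 : ℕ)) ((Sum.elim z u) p.1) with hB'def
      set M := Submodule.span F (Set.range B') with hMdef
      have hKleM : K ≤ M := by
        have h1 : Submodule.map K.subtype S ≤ M := by
          have hms : Submodule.map K.subtype S =
              Submodule.span F (K.subtype '' Set.range vK) := map_span _ _
          rw [hms]
          apply span_le.mpr
          rintro x ⟨y, ⟨k, rfl⟩, rfl⟩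
          apply subset_span
          exact ⟨⟨Sum.inl k, ⟨q k, by simp [hq'def]⟩⟩, rfl⟩
        have h2 : Submodule.map K.subtype C ≤ M := by
          have hCspan : Submodule.span F (Set.range fun i => ((uB i : K))) = C := by
            have := congrArg (Submodule.map C.subtype) uB.span_eq
            rw [Submodule.map_subtype_top, map_span, ← Set.range_comp] at this
            exact this
          rw [← hCspan, map_span, ← Set.range_comp]
          apply span_le.mpr
          rintro x ⟨i, rfl⟩
          apply subset_span
          exact ⟨⟨Sum.inr i, ⟨0, by simp [hq'def]⟩⟩, rfl⟩
        calc K = Submodule.map K.subtype (S ⊔ C) := by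
                rw [hC.sup_eq_top, Submodule.map_subtype_top]
          _ = Submodule.map K.subtype S ⊔ Submodule.map K.subtype C :=
                Submodule.map_sup _ _ _
          _ ≤ M := sup_le h1 h2
      have hWle : W ≤ Submodule.map A M := by
        have hWspan : W = Submodule.span F
            (Set.range fun p : Σ k : ι, Fin (q k) => (A ^ (p.2 : ℕ)) ((w p.1 : V))) := by
          have h2 := congrArg (Submodule.map W.subtype) hspan
          rw [Submodule.map_subtype_top, map_span, ← Set.range_comp] at h2
          refine h2.symm.trans ?_
          exact congrArg (Submodule.span F)
            (congrArg Set.range (funext fun p => hcoe _ _))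
        rw [hWspan]
        apply span_le.mpr
        rintro x ⟨⟨k, j⟩, rfl⟩
        refine ⟨B' ⟨Sum.inl k, ⟨(j : ℕ), by have := j.isLt; simp [hq'def]⟩⟩,
          subset_span (Set.mem_range_self _), ?_⟩
        show A ((A ^ (j : ℕ)) (z k)) = _
        rw [← Module.End.mul_apply, ← pow_succ', hAz]
      have hspan' : Submodule.span F (Set.range B') = ⊤ := by
        rw [eq_top_iff]
        intro x _
        obtain ⟨y, hyM, hyx⟩ := hWle (LinearMap.mem_range_self A x)
        have hxy : x - y ∈ K := by
          rw [hKdef, LinearMap.mem_ker, map_sub, hyx, sub_self]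
        have h3 := hKleM hxy
        show x ∈ M
        simpa using M.add_mem h3 hyM
      have hcard : Fintype.card (Σ k : ι ⊕ Fin s, Fin (q' k)) = finrank F V := by
        rw [Fintype.card_sigma, Fintype.sum_sum_type]
        simp only [hq'def, Sum.elim_inl, Sum.elim_inr, Fintype.card_fin,
          Finset.sum_add_distrib, Finset.sum_const, Finset.card_univ, smul_eq_mul, mul_one]
        have h1 : finrank F W = ∑ k : ι, q k := by
          rw [finrank_eq_card_basis (Basis.mk hindep hspan.ge), Fintype.card_sigma]
          simp
        have h2 : finrank F S = Fintype.card ι := finrank_span_eq_card hvindep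
        have h3 : finrank F S + finrank F C = finrank F K :=
          Submodule.finrank_add_eq_of_isCompl hC
        have h4 : finrank F W + finrank F K = finrank F V :=
          LinearMap.finrank_range_add_finrank_ker A
        omega
      have hB'indep : LinearIndependent F B' := by
        have hb := coe_basisOfTopLeSpanOfCardEqFinrank B' hspan'.ge hcard
        rw [← hb]
        exact (basisOfTopLeSpanOfCardEqFinrank B' hspan'.ge hcard).linearIndependent
      first
        | exact hB'indep
        | exact hspan'
    }

end Aux

/-- A nilpotent endomorphism `A` of a finite dimensional vector space admits vectors
`z_1, …, z_r` so that `V` is the internal direct sum of the cyclic submodules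
`F[A]·z_k`, and the lengths `dim F[A]·z_k`, arranged in decreasing order, form the
Jordan type of `A`. -/
theorem exists_cyclic_decomposition
    (F V : Type*) [Field F] [AddCommGroup V] [Module F V] [FiniteDimensional F V]
    (A : Module.End F V) (hA : IsNilpotent A) :
    ∃ (r : ℕ) (z : Fin r → V),
      iSupIndep (fun k : Fin r => cyclicSub F V A (z k)) ∧
      (⨆ k : Fin r, cyclicSub F V A (z k)) = ⊤ ∧
      ∃ Q : List ℕ, IsJordanType F V A Q ∧
        Q.Perm (List.ofFn fun k : Fin r =>
          Module.finrank F ↥(cyclicSub F V A (z k))) := by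
  obtain ⟨ι, _, q, z, hqpos, hq0, hindep, hspan⟩ :=
    key_ind (F := F) (Module.finrank F V) V A hA le_rfl
  set r := Fintype.card ι with hrdef
  set e : Fin r ≃ ι := (Fintype.equivFin ι).symm with hedef
  set q' : Fin r → ℕ := fun k => q (e k) with hq'def
  set z' : Fin r → V := fun k => z (e k) with hz'def
  set B' : (Σ k : Fin r, Fin (q' k)) → V :=
    fun p => (A ^ (p.2 : ℕ)) (z' p.1) with hB'def
  have hB'comp : B' = (fun p : Σ k : ι, Fin (q k) => (A ^ (p.2 : ℕ)) (z p.1)) ∘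
      (Equiv.sigmaCongrLeft e) := rfl
  have hindep' : LinearIndependent F B' := by
    rw [hB'comp]
    exact hindep.comp _ (Equiv.injective _)
  have hspan' : Submodule.span F (Set.range B') = ⊤ := by
    rw [hB'comp, (Equiv.surjective (Equiv.sigmaCongrLeft e)).range_comp]
    exact hspan
  have hzero' : ∀ k, (A ^ q' k) (z' k) = 0 := fun k => hq0 (e k)
  have hhigh : ∀ (k : Fin r) (j : ℕ), q' k ≤ j → (A ^ j) (z' k) = 0 := by
    intro k j hj
    rw [show j = (j - q' k) + q' k from by omega, pow_add, Module.End.mul_apply,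
      hzero', map_zero]
  have hcyc : ∀ k, cyclicSub F V A (z' k) =
      Submodule.span F (Set.range fun j : Fin (q' k) => (A ^ (j : ℕ)) (z' k)) := by
    intro k
    apply le_antisymm
    · rw [cyclicSub]
      apply Submodule.span_le.mpr
      rintro x ⟨j, rfl⟩
      show (A ^ j) (z' k) ∈ _
      by_cases hj : j < q' k
      · exact Submodule.subset_span ⟨⟨j, hj⟩, rfl⟩
      · rw [hhigh k j (by omega)]
        exact zero_mem _
    · apply Submodule.span_le.mpr
      rintro x ⟨j, rfl⟩
      exact Submodule.subset_span ⟨(j : ℕ), rfl⟩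
  have hindep_blk : ∀ k, LinearIndependent F
      (fun j : Fin (q' k) => (A ^ (j : ℕ)) (z' k)) := by
    intro k
    exact hindep'.comp (Sigma.mk k) sigma_mk_injective
  have hfr : ∀ k, finrank F (cyclicSub F V A (z' k)) = q' k := by
    intro k
    rw [hcyc, finrank_span_eq_card (hindep_blk k), Fintype.card_fin]
  have himg : ∀ k : Fin r, cyclicSub F V A (z' k) =
      Submodule.span F (B' '' {p : Σ k : Fin r, Fin (q' k) | p.1 = k}) := by
    intro k
    rw [hcyc]
    congr 1
    ext x
    simp only [Set.mem_range, Set.mem_image, Set.mem_setOf_eq]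
    constructor
    · rintro ⟨j, rfl⟩
      exact ⟨⟨k, j⟩, rfl, rfl⟩
    · rintro ⟨⟨k', j⟩, (rfl : k' = k), rfl⟩
      exact ⟨j, rfl⟩
  refine ⟨r, z', ?_, ?_, ?_⟩
  · -- iSupIndep
    rw [iSupIndep_def]
    intro k
    have hdisj := hindep'.disjoint_span_image
      (s := {p : Σ k : Fin r, Fin (q' k) | p.1 = k})
      (t := {p : Σ k : Fin r, Fin (q' k) | p.1 ≠ k})
      (by simp [Set.disjoint_left])
    rw [← himg] at hdisj
    refine hdisj.mono_right ?_
    apply iSup_le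
    intro j
    apply iSup_le
    intro hjk
    rw [himg]
    apply Submodule.span_mono
    apply Set.image_mono
    intro p hp
    simp only [Set.mem_setOf_eq] at hp ⊢
    rw [hp]
    exact hjk
  · -- iSup = ⊤
    apply le_antisymm le_top
    rw [← hspan']
    apply Submodule.span_le.mpr
    rintro x ⟨⟨k, j⟩, rfl⟩
    refine Submodule.mem_iSup_of_mem k ?_
    rw [hcyc]
    exact Submodule.subset_span ⟨j, rfl⟩
  · -- Jordan type
    have hker : ∀ m : ℕ, ∑ k : Fin r, min (q' k) m =
        finrank F (LinearMap.ker (A ^ m)) := by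
      intro m
      set g : (Σ k : Fin r, Fin (q' k - m)) → V :=
        fun p => B' ⟨p.1, ⟨m + (p.2 : ℕ), by have := p.2.isLt; omega⟩⟩ with hgdef
      have hginj : Function.Injective
          (fun p : Σ k : Fin r, Fin (q' k - m) =>
            (⟨p.1, ⟨m + (p.2 : ℕ), by have := p.2.isLt; omega⟩⟩ : Σ k : Fin r, Fin (q' k))) := by
        rintro ⟨k, j, hj⟩ ⟨k', j', hj'⟩ h
        dsimp only at h
        obtain ⟨h1, h2⟩ := Sigma.mk.inj_iff.mp h
        subst h1
        rw [heq_eq_eq, Fin.mk.injEq] at h2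
        simp only [Sigma.mk.inj_iff, heq_eq_eq, Fin.mk.injEq, true_and]
        omega
      have hgindep : LinearIndependent F g := hindep'.comp _ hginj
      have hrange : LinearMap.range (A ^ m) = Submodule.span F (Set.range g) := by
        rw [LinearMap.range_eq_map, ← hspan', map_span]
        apply le_antisymm
        · apply Submodule.span_le.mpr
          rintro x ⟨y, ⟨⟨k, j⟩, rfl⟩, rfl⟩
          by_cases hj : m + (j : ℕ) < q' k
          · apply Submodule.subset_span
            refine ⟨⟨k, ⟨(j : ℕ), by omega⟩⟩, ?_⟩
            show (A ^ (m + (j : ℕ))) (z' k) = (A ^ m) ((A ^ (j : ℕ)) (z' k))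
            rw [pow_add, Module.End.mul_apply]
          · have : (A ^ m) (B' ⟨k, j⟩) = (A ^ (m + (j : ℕ))) (z' k) := by
              show (A ^ m) ((A ^ (j : ℕ)) (z' k)) = _
              rw [pow_add, Module.End.mul_apply]
            rw [this, hhigh k _ (by omega)]
            exact zero_mem _
        · apply Submodule.span_le.mpr
          rintro x ⟨⟨k, j⟩, rfl⟩
          apply Submodule.subset_span
          refine ⟨(A ^ (j : ℕ)) (z' k),
            ⟨⟨k, ⟨(j : ℕ), by have := j.isLt; omega⟩⟩, rfl⟩, ?_⟩
          show (A ^ m) ((A ^ (j : ℕ)) (z' k)) = (A ^ (m + (j : ℕ))) (z' k)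
          rw [pow_add, Module.End.mul_apply]
      have hrk : finrank F (LinearMap.range (A ^ m)) = ∑ k : Fin r, (q' k - m) := by
        rw [hrange, finrank_span_eq_card hgindep, Fintype.card_sigma]
        simp
      have hdim : finrank F V = ∑ k : Fin r, q' k := by
        have h1 := finrank_span_eq_card hindep'
        rw [hspan', finrank_top, Fintype.card_sigma] at h1
        simpa using h1
      have hrn := LinearMap.finrank_range_add_finrank_ker (A ^ m)
      have h1 : ∑ k : Fin r, min (q' k) m =
          (∑ k : Fin r, q' k) - ∑ k : Fin r, (q' k - m) := by
        rw [← Finset.sum_tsub_distrib _ (fun k _ => Nat.sub_le _ _)]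
        apply Finset.sum_congr rfl
        intro k _
        omega
      omega
    refine ⟨List.insertionSort (· ≥ ·) (List.ofFn q'), ⟨?_, ?_, ?_⟩, ?_⟩
    · exact List.pairwise_insertionSort _ _
    · intro p hp
      have := (List.perm_insertionSort (· ≥ ·) (List.ofFn q')).mem_iff.mp hp
      rw [List.mem_ofFn] at this
      obtain ⟨k, rfl⟩ := this
      exact hqpos (e k)
    · intro m
      rw [((List.perm_insertionSort (· ≥ ·) (List.ofFn q')).map _).sum_eq,
        List.map_ofFn, List.sum_ofFn]
      exact hker m
    · have : (List.ofFn fun k : Fin r => finrank F (cyclicSub F V A (z' k))) =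
          List.ofFn q' := by
        congr 1
        exact funext hfr
      rw [this]
      exact List.perm_insertionSort _ _
end

section
/- Let D be a finite poset and define c_i as the maximum number of vertices covered by a union of i chains. Then the sequence c_i − c_{i−1} is weakly decreasing in i, i.e., λ(D) is a partition. (Greene's theorem on concavity of the chain-covering numbers.) -/
open Finset
set_option linter.unusedSectionVars false
set_option linter.unusedVariables false

namespace Greene

variable {α : Type*} [Fintype α] [PartialOrder α] [DecidableEq α]

abbrev Node (α : Type*) := (α × Bool) ⊕ Bool

variable (α) in
def nS : Node α := Sum.inr false
variable (α) in
def nT : Node α := Sum.inr true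

def vi (v : α) : Node α := Sum.inl (v, false)
def vo (v : α) : Node α := Sum.inl (v, true)

lemma vi_ne_vo (v w : α) : vi v ≠ vo w := by simp [vi, vo]
lemma vi_inj {v w : α} (h : vi v = vi w) : v = w := by
  simpa [vi] using h
lemma vo_inj {v w : α} (h : vo v = vo w) : v = w := by
  simpa [vo] using h
lemma nS_ne_nT : nS α ≠ nT α := by simp [nS, nT]
lemma vi_ne_nS (v : α) : vi v ≠ nS α := by simp [vi, nS]
lemma vi_ne_nT (v : α) : vi v ≠ nT α := by simp [vi, nT]
lemma vo_ne_nS (v : α) : vo v ≠ nS α := by simp [vo, nS]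
lemma vo_ne_nT (v : α) : vo v ≠ nT α := by simp [vo, nT]

/-- The edge relation of the chain-flow network. -/
def E : Node α → Node α → Prop
  | Sum.inr false, Sum.inl (_, false) => True
  | Sum.inl (v, false), Sum.inl (w, true) => v = w
  | Sum.inl (v, true), Sum.inl (w, false) => v < w
  | Sum.inl (_, true), Sum.inr true => True
  | _, _ => False

lemma E_vi_out {v : α} {m : Node α} (h : E (vi v) m) : m = vo v := by
  rcases m with ⟨w, b⟩ | b
  · cases b
    · exact absurd h (by simp [E, vi])
    · have : v = w := h
      simp [vo, this]
  · cases b <;> exact absurd h (by simp [E, vi])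

lemma E_vo_in {v : α} {m : Node α} (h : E m (vo v)) : m = vi v := by
  rcases m with ⟨w, b⟩ | b
  · cases b
    · have : w = v := h
      simp [vi, this]
    · exact absurd h (by simp [E, vo])
  · cases b <;> exact absurd h (by simp [E, vo])

lemma E_vi_in {v : α} {m : Node α} (h : E m (vi v)) :
    m = nS α ∨ ∃ u, u < v ∧ m = vo u := by
  rcases m with ⟨w, b⟩ | b
  · cases b
    · exact absurd h (by simp [E, vi])
    · exact Or.inr ⟨w, h, rfl⟩
  · cases b
    · exact Or.inl rfl
    · exact absurd h (by simp [E, vi])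

lemma E_vo_out {v : α} {m : Node α} (h : E (vo v) m) :
    m = nT α ∨ ∃ w, v < w ∧ m = vi w := by
  rcases m with ⟨w, b⟩ | b
  · cases b
    · exact Or.inr ⟨w, h, rfl⟩
    · exact absurd h (by simp [E, vo])
  · cases b
    · exact absurd h (by simp [E, vo])
    · exact Or.inl rfl

lemma not_E_to_nS {m : Node α} : ¬ E m (nS α) := by
  rcases m with ⟨w, b⟩ | b <;> [skip; skip] <;> cases b <;> simp [E, nS]

lemma not_E_from_nT {m : Node α} : ¬ E (nT α) m := by
  rcases m with ⟨w, b⟩ | b <;> [skip; skip] <;> cases b <;> simp [E, nT]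

/-! ### Flows -/

def inAt (f : Node α → Node α → ℤ) (n : Node α) : ℤ := ∑ m, f m n
def outAt (f : Node α → Node α → ℤ) (n : Node α) : ℤ := ∑ m, f n m
def consAt (f : Node α → Node α → ℤ) (n : Node α) : Prop := inAt f n = outAt f n

def IsCapped (f : Node α → Node α → ℤ) : Prop := ∀ n m, 0 ≤ f n m ∧ f n m ≤ 1
def IsSupp (f : Node α → Node α → ℤ) : Prop := ∀ n m, f n m ≠ 0 → E n m

structure IsFlow (f : Node α → Node α → ℤ) : Prop where
  capped : IsCapped f
  supp : IsSupp f
  cons : ∀ p : α × Bool, consAt f (Sum.inl p)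

def value (f : Node α → Node α → ℤ) : ℤ := outAt f (nS α)
def Cov (f : Node α → Node α → ℤ) : Finset α :=
  univ.filter (fun v => f (vi v) (vo v) = 1)

lemma consAt_vi {f : Node α → Node α → ℤ} (hf : IsFlow f) (v : α) :
    consAt f (vi v) := hf.cons (v, false)
lemma consAt_vo {f : Node α → Node α → ℤ} (hf : IsFlow f) (v : α) :
    consAt f (vo v) := hf.cons (v, true)

lemma outAt_vi {f : Node α → Node α → ℤ} (hs : IsSupp f) (v : α) :
    outAt f (vi v) = f (vi v) (vo v) := by
  refine Finset.sum_eq_single (vo v) (fun m _ hm => ?_) (by simp)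
  by_contra h
  exact hm (E_vi_out (hs _ _ h))

lemma inAt_vo {f : Node α → Node α → ℤ} (hs : IsSupp f) (v : α) :
    inAt f (vo v) = f (vi v) (vo v) := by
  refine Finset.sum_eq_single (vi v) (fun m _ hm => ?_) (by simp)
  by_contra h
  exact hm (E_vo_in (hs _ _ h))

lemma inAt_nS {f : Node α → Node α → ℤ} (hs : IsSupp f) :
    inAt f (nS α) = 0 := by
  refine Finset.sum_eq_zero (fun m _ => ?_)
  by_contra h
  exact not_E_to_nS (hs _ _ h)

lemma value_nonneg {f : Node α → Node α → ℤ} (hc : IsCapped f) : 0 ≤ value f :=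
  Finset.sum_nonneg (fun m _ => (hc _ _).1)

/-- profit as a sum -/
def profit (f : Node α → Node α → ℤ) : ℤ := ∑ v, f (vi v) (vo v)

lemma profit_eq_card_cov {f : Node α → Node α → ℤ} (hc : IsCapped f) :
    profit f = (Cov f).card := by
  classical
  have : ∀ v : α, f (vi v) (vo v) = (if f (vi v) (vo v) = 1 then (1:ℤ) else 0) := by
    intro v
    rcases (hc (vi v) (vo v)) with ⟨h0, h1⟩
    interval_cases h : f (vi v) (vo v) <;> simp
  rw [profit]
  rw [Finset.sum_congr rfl (fun v _ => this v)]
  rw [Finset.sum_boole]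
  simp [Cov]

/-! ### Module 2 : chains to flows -/

variable {i : ℕ} in
def isMn (D : Fin i → Finset α) (v : α) : Prop := ∃ j, v ∈ D j ∧ ∀ u ∈ D j, ¬ u < v
variable {i : ℕ} in
def isMx (D : Fin i → Finset α) (v : α) : Prop := ∃ j, v ∈ D j ∧ ∀ u ∈ D j, ¬ v < u
variable {i : ℕ} in
def nextR (D : Fin i → Finset α) (v w : α) : Prop :=
  v < w ∧ ∃ j, v ∈ D j ∧ w ∈ D j ∧ ∀ u ∈ D j, ¬(v < u ∧ u < w)

open scoped Classical in
variable {i : ℕ} in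
noncomputable def chainFlow (D : Fin i → Finset α) : Node α → Node α → ℤ
  | Sum.inr false, Sum.inl (v, false) => if isMn D v then 1 else 0
  | Sum.inl (v, false), Sum.inl (w, true) =>
      if v = w ∧ v ∈ Finset.univ.biUnion D then 1 else 0
  | Sum.inl (v, true), Sum.inl (w, false) => if nextR D v w then 1 else 0
  | Sum.inl (v, true), Sum.inr true => if isMx D v then 1 else 0
  | _, _ => 0

section ChainFlow

variable {i : ℕ} (D : Fin i → Finset α)

local notation "U" => Finset.univ.biUnion D

open scoped Classical

lemma chainFlow_s (v : α) :
    chainFlow D (nS α) (vi v) = if isMn D v then 1 else 0 := rfl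
lemma chainFlow_diag (v w : α) :
    chainFlow D (vi v) (vo w) = if v = w ∧ v ∈ U then 1 else 0 := rfl
lemma chainFlow_mid (v w : α) :
    chainFlow D (vo v) (vi w) = if nextR D v w then 1 else 0 := rfl
lemma chainFlow_t (v : α) :
    chainFlow D (vo v) (nT α) = if isMx D v then 1 else 0 := rfl

lemma chainFlow_capped : IsCapped (chainFlow D) := by
  rintro (⟨v, (_|_)⟩ | (_|_)) (⟨w, (_|_)⟩ | (_|_)) <;>
    simp [chainFlow, vi, vo, nS, nT] <;> split <;> simp

lemma chainFlow_supp : IsSupp (chainFlow D) := by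
  rintro (⟨v, (_|_)⟩ | (_|_)) (⟨w, (_|_)⟩ | (_|_)) h <;>
    simp only [chainFlow] at h <;> simp [E] at h ⊢ <;> first
    | (split at h <;> simp_all)
    | skip
  · rcases h with ⟨h1, _⟩; exact h1
  · exact h.1


variable (hch : ∀ j, IsChain (· ≤ ·) ((D j : Set α)))
  (hdisj : ∀ j j', j ≠ j' → Disjoint (D j) (D j'))

omit [Fintype α] in
include hdisj in
lemma mem_unique {v : α} {j j' : Fin i} (h : v ∈ D j) (h' : v ∈ D j') : j = j' := by
  by_contra hne
  exact (Finset.disjoint_left.1 (hdisj j j' hne)) h h'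

omit [Fintype α] in
include hch hdisj in
lemma nextR_unique_left {v u₁ u₂ : α} (h1 : nextR D u₁ v) (h2 : nextR D u₂ v) :
    u₁ = u₂ := by
  obtain ⟨hlt1, j1, hu1, hv1, hb1⟩ := h1
  obtain ⟨hlt2, j2, hu2, hv2, hb2⟩ := h2
  obtain rfl : j1 = j2 := mem_unique D hdisj hv1 hv2
  by_contra hne
  rcases hch j1 hu1 hu2 hne with h | h
  · exact hb1 u₂ hu2 ⟨lt_of_le_of_ne h hne, hlt2⟩
  · exact hb2 u₁ hu1 ⟨lt_of_le_of_ne h (Ne.symm hne), hlt1⟩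

omit [Fintype α] in
include hch hdisj in
lemma nextR_unique_right {v w₁ w₂ : α} (h1 : nextR D v w₁) (h2 : nextR D v w₂) :
    w₁ = w₂ := by
  obtain ⟨hlt1, j1, hv1, hw1, hb1⟩ := h1
  obtain ⟨hlt2, j2, hv2, hw2, hb2⟩ := h2
  obtain rfl : j1 = j2 := mem_unique D hdisj hv1 hv2
  by_contra hne
  rcases hch j1 hw1 hw2 hne with h | h
  · exact hb2 w₁ hw1 ⟨hlt1, lt_of_le_of_ne h hne⟩
  · exact hb1 w₂ hw2 ⟨hlt2, lt_of_le_of_ne h (Ne.symm hne)⟩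

omit [Fintype α] in
include hdisj in
lemma not_isMn_nextR {v u : α} (hm : isMn D v) (hn : nextR D u v) : False := by
  obtain ⟨j, hvj, hmin⟩ := hm
  obtain ⟨hlt, j', huj, hvj', _⟩ := hn
  obtain rfl : j' = j := mem_unique D hdisj hvj' hvj
  exact hmin u huj hlt

omit [Fintype α] in
include hdisj in
lemma not_isMx_nextR {v w : α} (hm : isMx D v) (hn : nextR D v w) : False := by
  obtain ⟨j, hvj, hmax⟩ := hm
  obtain ⟨hlt, j', hvj', hwj, _⟩ := hn
  obtain rfl : j' = j := mem_unique D hdisj hvj' hvj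
  exact hmax w hwj hlt

omit [Fintype α] in
include hch in
lemma exists_nextR_left {v : α} {j : Fin i} (hv : v ∈ D j) (h : ¬ isMn D v) :
    ∃ u, nextR D u v := by
  have : ∃ u ∈ D j, u < v := by
    by_contra hc
    push_neg at hc
    exact h ⟨j, hv, hc⟩
  obtain ⟨u0, hu0, hlt0⟩ := this
  obtain ⟨m, hm, hmax⟩ : ∃ m ∈ (D j).filter (· < v), ∀ x ∈ (D j).filter (· < v), ¬ m < x := by
    obtain ⟨m, hm⟩ := Finset.exists_maximal (s := (D j).filter (· < v)) ⟨u0, Finset.mem_filter.2 ⟨hu0, hlt0⟩⟩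
    exact ⟨m, hm.1, fun x hx hlt => lt_irrefl _ (lt_of_lt_of_le hlt (hm.2 hx hlt.le))⟩
  rw [Finset.mem_filter] at hm
  refine ⟨m, hm.2, j, hm.1, hv, fun u hu ⟨h1, h2⟩ => ?_⟩
  exact hmax u (Finset.mem_filter.2 ⟨hu, h2⟩) h1

omit [Fintype α] in
include hch in
lemma exists_nextR_right {v : α} {j : Fin i} (hv : v ∈ D j) (h : ¬ isMx D v) :
    ∃ w, nextR D v w := by
  have : ∃ w ∈ D j, v < w := by
    by_contra hc
    push_neg at hc
    exact h ⟨j, hv, hc⟩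
  obtain ⟨u0, hu0, hlt0⟩ := this
  obtain ⟨m, hm, hmin⟩ : ∃ m ∈ (D j).filter (v < ·), ∀ x ∈ (D j).filter (v < ·), ¬ x < m := by
    obtain ⟨m, hm⟩ := Finset.exists_minimal (s := (D j).filter (v < ·)) ⟨u0, Finset.mem_filter.2 ⟨hu0, hlt0⟩⟩
    exact ⟨m, hm.1, fun x hx hlt => lt_irrefl _ (lt_of_lt_of_le hlt (hm.2 hx hlt.le))⟩
  rw [Finset.mem_filter] at hm
  refine ⟨m, hm.2, j, hv, hm.1, fun u hu ⟨h1, h2⟩ => ?_⟩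
  exact hmin u (Finset.mem_filter.2 ⟨hu, h1⟩) h2

lemma sum_node (g : Node α → ℤ) :
    ∑ n, g n = (∑ v, g (vi v)) + (∑ v, g (vo v)) + g (nS α) + g (nT α) := by
  rw [Fintype.sum_sum_type, Fintype.sum_prod_type]
  simp only [Fintype.sum_bool, vi, vo, nS, nT, Finset.sum_add_distrib]
  ring

include hch hdisj in
lemma chainFlow_cons : ∀ p : α × Bool, consAt (chainFlow D) (Sum.inl p) := by
  classical
  rintro ⟨v, b⟩
  cases b
  · -- node (vi v)
    show inAt _ (vi v) = outAt _ (vi v)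
    rw [outAt_vi (chainFlow_supp D), chainFlow_diag]
    have hin : inAt (chainFlow D) (vi v) =
        (∑ u, chainFlow D (vo u) (vi v)) + chainFlow D (nS α) (vi v) := by
      rw [inAt, sum_node (fun m => chainFlow D m (vi v))]
      have h1 : ∀ u : α, chainFlow D (vi u) (vi v) = 0 := fun u => rfl
      have h2 : chainFlow D (nT α) (vi v) = 0 := rfl
      simp [h1, h2]
    rw [hin]
    simp only [chainFlow_mid, chainFlow_s]
    by_cases hU : v ∈ Finset.univ.biUnion D
    · obtain ⟨j, -, hvj⟩ := Finset.mem_biUnion.1 hU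
      by_cases hmn : isMn D v
      · have hz : ∀ u : α, (if nextR D u v then (1:ℤ) else 0) = 0 := by
          intro u
          rw [if_neg (fun hn => not_isMn_nextR D hdisj hmn hn)]
        rw [Finset.sum_congr rfl (fun u _ => hz u)]
        simp [hmn, hU]
      · obtain ⟨u₀, hu₀⟩ := exists_nextR_left D hch hvj hmn
        have : (∑ u, if nextR D u v then (1:ℤ) else 0) = 1 := by
          rw [Finset.sum_eq_single u₀ (fun u _ hne => if_neg
            (fun hn => hne (nextR_unique_left D hch hdisj hn hu₀))) (by simp)]
          rw [if_pos hu₀]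
        rw [this]
        simp [hmn, hU]
    · have hz : ∀ u : α, (if nextR D u v then (1:ℤ) else 0) = 0 := by
        intro u
        refine if_neg (fun hn => hU ?_)
        obtain ⟨-, j, -, hvj, -⟩ := hn
        exact Finset.mem_biUnion.2 ⟨j, Finset.mem_univ _, hvj⟩
      have hmn : ¬ isMn D v := by
        rintro ⟨j, hvj, -⟩
        exact hU (Finset.mem_biUnion.2 ⟨j, Finset.mem_univ _, hvj⟩)
      rw [Finset.sum_congr rfl (fun u _ => hz u)]
      simp [hmn, hU]
  · -- node (vo v)
    show inAt _ (vo v) = outAt _ (vo v)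
    rw [inAt_vo (chainFlow_supp D), chainFlow_diag]
    have hout : outAt (chainFlow D) (vo v) =
        (∑ w, chainFlow D (vo v) (vi w)) + chainFlow D (vo v) (nT α) := by
      rw [outAt, sum_node (fun m => chainFlow D (vo v) m)]
      have h1 : ∀ w : α, chainFlow D (vo v) (vo w) = 0 := fun w => rfl
      have h2 : chainFlow D (vo v) (nS α) = 0 := rfl
      simp [h1, h2]
    rw [hout]
    simp only [chainFlow_mid, chainFlow_t]
    by_cases hU : v ∈ Finset.univ.biUnion D
    · obtain ⟨j, -, hvj⟩ := Finset.mem_biUnion.1 hU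
      by_cases hmx : isMx D v
      · have hz : ∀ w : α, (if nextR D v w then (1:ℤ) else 0) = 0 := by
          intro w
          rw [if_neg (fun hn => not_isMx_nextR D hdisj hmx hn)]
        rw [Finset.sum_congr rfl (fun w _ => hz w)]
        simp [hmx, hU]
      · obtain ⟨w₀, hw₀⟩ := exists_nextR_right D hch hvj hmx
        have : (∑ w, if nextR D v w then (1:ℤ) else 0) = 1 := by
          rw [Finset.sum_eq_single w₀ (fun w _ hne => if_neg
            (fun hn => hne (nextR_unique_right D hch hdisj hn hw₀))) (by simp)]
          rw [if_pos hw₀]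
        rw [this]
        simp [hmx, hU]
    · have hz : ∀ w : α, (if nextR D v w then (1:ℤ) else 0) = 0 := by
        intro w
        refine if_neg (fun hn => hU ?_)
        obtain ⟨-, j, hvj, -, -⟩ := hn
        exact Finset.mem_biUnion.2 ⟨j, Finset.mem_univ _, hvj⟩
      have hmx : ¬ isMx D v := by
        rintro ⟨j, hvj, -⟩
        exact hU (Finset.mem_biUnion.2 ⟨j, Finset.mem_univ _, hvj⟩)
      rw [Finset.sum_congr rfl (fun w _ => hz w)]
      simp [hmx, hU]

include hch hdisj in
lemma chainFlow_isFlow : IsFlow (chainFlow D) :=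
  ⟨chainFlow_capped D, chainFlow_supp D, chainFlow_cons D hch hdisj⟩

include hch hdisj in
lemma chainFlow_value : value (chainFlow D) ≤ i := by
  classical
  have hval : value (chainFlow D) =
      ((Finset.univ.filter (fun v => isMn D v)).card : ℤ) := by
    rw [value, outAt, sum_node (fun m => chainFlow D (nS α) m)]
    have h1 : ∀ w : α, chainFlow D (nS α) (vo w) = 0 := fun w => rfl
    have h2 : chainFlow D (nS α) (nS α) = 0 := rfl
    have h3 : chainFlow D (nS α) (nT α) = 0 := rfl
    simp only [h1, h2, h3, Finset.sum_const, chainFlow_s]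
    rw [Finset.sum_boole]
    simp
  have hcard : (Finset.univ.filter (fun v => isMn D v)).card ≤ i := by
    rcases Nat.eq_zero_or_pos i with hi | hi
    · subst hi
      have : Finset.univ.filter (fun v => isMn D v) = ∅ := by
        ext v
        simp only [Finset.mem_filter, Finset.notMem_empty, iff_false, not_and]
        rintro - ⟨j, -, -⟩
        exact j.elim0
      simp [this]
    · haveI : Nonempty (Fin i) := ⟨⟨0, hi⟩⟩
      have := Finset.card_le_card_of_injOn
        (f := fun v => if h : isMn D v then Classical.choose h else Classical.arbitrary (Fin i))
        (s := Finset.univ.filter (fun v => isMn D v)) (t := Finset.univ)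
        (fun v _ => Finset.mem_univ _) ?_
      · simpa using this
      · intro v₁ hv₁ v₂ hv₂ heq
        simp only [Finset.coe_filter, Set.mem_setOf_eq, Finset.mem_univ, true_and] at hv₁ hv₂
        simp only [dif_pos hv₁, dif_pos hv₂] at heq
        obtain ⟨hm₁, hmin₁⟩ := Classical.choose_spec hv₁
        obtain ⟨hm₂, hmin₂⟩ := Classical.choose_spec hv₂
        rw [heq] at hm₁
        by_contra hne
        rcases hch _ hm₁ hm₂ hne with h | h
        · exact hmin₂ v₁ hm₁ (lt_of_le_of_ne h hne)
        · rw [← heq] at hm₂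
          exact hmin₁ v₂ hm₂ (lt_of_le_of_ne h (Ne.symm hne))
  rw [hval]
  exact_mod_cast hcard

lemma chainFlow_cov : Cov (chainFlow D) = Finset.univ.biUnion D := by
  ext v
  simp only [Cov, Finset.mem_filter, Finset.mem_univ, true_and, chainFlow_diag]
  by_cases hv : v ∈ Finset.univ.biUnion D
  · simp [hv]
  · simp [hv]

end ChainFlow

/-! ### Disjointification -/

lemma disjointify {i : ℕ} (C : Fin i → Finset α)
    (hch : ∀ j, IsChain (· ≤ ·) ((C j : Set α))) :
    ∃ D : Fin i → Finset α, (∀ j, IsChain (· ≤ ·) ((D j : Set α))) ∧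
      (∀ j j', j ≠ j' → Disjoint (D j) (D j')) ∧
      Finset.univ.biUnion D = Finset.univ.biUnion C := by
  classical
  refine ⟨fun j => C j \ (Finset.univ.filter (· < j)).biUnion C, ?_, ?_, ?_⟩
  · intro j
    exact (hch j).mono (by intro x hx; simp only [Finset.coe_sdiff, Set.mem_diff] at hx; exact hx.1)
  · intro j j' hne
    rcases lt_or_gt_of_ne hne with h | h
    · rw [Finset.disjoint_left]
      intro x hx hx'
      have hx1 : x ∈ C j := (Finset.mem_sdiff.1 hx).1
      have := (Finset.mem_sdiff.1 hx').2
      exact this (Finset.mem_biUnion.2 ⟨j, by simp [h], hx1⟩)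
    · rw [Finset.disjoint_right]
      intro x hx hx'
      have hx1 : x ∈ C j' := (Finset.mem_sdiff.1 hx).1
      have := (Finset.mem_sdiff.1 hx').2
      exact this (Finset.mem_biUnion.2 ⟨j', by simp [h], hx1⟩)
  · ext x
    simp only [Finset.mem_biUnion, Finset.mem_univ, true_and]
    constructor
    · rintro ⟨j, hj⟩
      exact ⟨j, (Finset.mem_sdiff.1 hj).1⟩
    · rintro ⟨j, hj⟩
      have hne : (Finset.univ.filter (fun j' => x ∈ C j')).Nonempty :=
        ⟨j, by simp [hj]⟩
      obtain ⟨j₀, hj₀, hmin⟩ : ∃ j₀ ∈ Finset.univ.filter (fun j' => x ∈ C j'), ∀ j₁ ∈ Finset.univ.filter (fun j' => x ∈ C j'), ¬ j₁ < j₀ := by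
          obtain ⟨m, hm⟩ := Finset.exists_minimal hne
          exact ⟨m, hm.1, fun y hy hlt => lt_irrefl _ (lt_of_lt_of_le hlt (hm.2 hy hlt.le))⟩
      simp only [Finset.mem_filter, Finset.mem_univ, true_and] at hj₀
      refine ⟨j₀, Finset.mem_sdiff.2 ⟨hj₀, fun hmem => ?_⟩⟩
      obtain ⟨j₁, hj₁, hxj₁⟩ := Finset.mem_biUnion.1 hmem
      simp only [Finset.mem_filter, Finset.mem_univ, true_and] at hj₁
      exact hmin j₁ (by simp [hxj₁]) hj₁

lemma exists_flow_of_chains {i : ℕ} (C : Fin i → Finset α)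
    (hch : ∀ j, IsChain (· ≤ ·) ((C j : Set α))) :
    ∃ f : Node α → Node α → ℤ, IsFlow f ∧ value f ≤ i ∧
      Cov f = Finset.univ.biUnion C := by
  obtain ⟨D, hDch, hDdisj, hDU⟩ := disjointify C hch
  exact ⟨chainFlow D, chainFlow_isFlow D hDch hDdisj,
    chainFlow_value D hDch hDdisj, by rw [chainFlow_cov, hDU]⟩

/-! ### Module 3 : abstract reachability lemmas -/

section Abstract

variable {V : Type*} [Fintype V] [DecidableEq V]

lemma exists_reach (h : V → V → ℤ) (s t : V)
    (hcons : ∀ n, n ≠ s → n ≠ t → (∑ m, h m n) = ∑ m, h n m)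
    (hdiv : (∑ m, h m s) < ∑ m, h s m) :
    Relation.ReflTransGen (fun a b => 0 < h a b ∨ h b a < 0) s t := by
  classical
  set R : V → V → Prop := fun a b => 0 < h a b ∨ h b a < 0 with hR
  by_contra hreach
  set X : Finset V := Finset.univ.filter (fun n => Relation.ReflTransGen R s n) with hX
  have hsX : s ∈ X := Finset.mem_filter.2 ⟨Finset.mem_univ _, Relation.ReflTransGen.refl⟩
  have htX : t ∉ X := by simp [hX, hreach]
  have hout : ∀ n ∈ X, ∀ m ∉ X, h n m ≤ 0 ∧ 0 ≤ h m n := by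
    intro n hn m hm
    have hsn : Relation.ReflTransGen R s n := by
      simpa [hX] using hn
    have hnm : ¬ R n m := by
      intro hr
      exact hm (by simp [hX]; exact hsn.tail hr)
    rw [hR] at hnm
    exact ⟨le_of_not_gt (fun hh => hnm (Or.inl hh)), le_of_not_gt (fun hh => hnm (Or.inr hh))⟩
  -- compute the divergence over X
  have key : (∑ n ∈ X, ((∑ m, h n m) - (∑ m, h m n))) =
      (∑ n ∈ X, ∑ m ∈ Xᶜ, h n m) - (∑ n ∈ X, ∑ m ∈ Xᶜ, h m n) := by
    have e1 : ∀ n, (∑ m, h n m) = (∑ m ∈ X, h n m) + ∑ m ∈ Xᶜ, h n m := by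
      intro n
      rw [Finset.sum_add_sum_compl]
    have e2 : ∀ n, (∑ m, h m n) = (∑ m ∈ X, h m n) + ∑ m ∈ Xᶜ, h m n := by
      intro n
      rw [Finset.sum_add_sum_compl]
    calc (∑ n ∈ X, ((∑ m, h n m) - (∑ m, h m n)))
        = (∑ n ∈ X, ∑ m ∈ X, h n m) + (∑ n ∈ X, ∑ m ∈ Xᶜ, h n m)
          - ((∑ n ∈ X, ∑ m ∈ X, h m n) + (∑ n ∈ X, ∑ m ∈ Xᶜ, h m n)) := by
          simp only [Finset.sum_sub_distrib]
          rw [Finset.sum_congr rfl (fun n _ => e1 n), Finset.sum_congr rfl (fun n _ => e2 n)]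
          rw [Finset.sum_add_distrib, Finset.sum_add_distrib]
      _ = _ := by
          rw [Finset.sum_comm (s := X) (t := X) (f := fun n m => h m n)]
          ring
  have hle : (∑ n ∈ X, ((∑ m, h n m) - (∑ m, h m n))) ≤ 0 := by
    rw [key]
    have h1 : (∑ n ∈ X, ∑ m ∈ Xᶜ, h n m) ≤ 0 :=
      Finset.sum_nonpos (fun n hn => Finset.sum_nonpos (fun m hm =>
        (hout n hn m (by simpa using hm)).1))
    have h2 : 0 ≤ (∑ n ∈ X, ∑ m ∈ Xᶜ, h m n) :=
      Finset.sum_nonneg (fun n hn => Finset.sum_nonneg (fun m hm =>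
        (hout n hn m (by simpa using hm)).2))
    omega
  have heq : (∑ n ∈ X, ((∑ m, h n m) - (∑ m, h m n))) =
      (∑ m, h s m) - (∑ m, h m s) := by
    rw [Finset.sum_eq_single_of_mem s hsX]
    intro n hn hns
    have hnt : n ≠ t := fun hh => htX (hh ▸ hn)
    rw [hcons n hns hnt]
    ring
  omega

/-- From a chain list containing `a`, extract the suffix starting at `a`. -/
lemma chain_suffix_from {R : V → V → Prop} :
    ∀ (L : List V) (b : V), List.Chain R b L → (b :: L).Nodup →
      ∀ a, a ∈ b :: L → ∃ q : List V, List.Chain R a q ∧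
        (a :: q).getLast (by simp) = (b :: L).getLast (by simp) ∧ (a :: q).Nodup
  | [], b, hc, hnd, a, ha => by
      simp at ha
      subst ha
      exact ⟨[], List.Chain.nil, rfl, by simp⟩
  | c :: L', b, hc, hnd, a, ha => by
      rcases List.mem_cons.1 ha with rfl | ha'
      · exact ⟨c :: L', hc, rfl, hnd⟩
      · have hc' : List.Chain R c L' := (List.chain_cons.1 hc).2
        have hnd' : (c :: L').Nodup := hnd.of_cons
        obtain ⟨q, hq1, hq2, hq3⟩ := chain_suffix_from L' c hc' hnd' a ha'
        exact ⟨q, hq1, hq2.trans (List.getLast_cons (by simp)).symm, hq3⟩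

/-- nodup path extraction -/
lemma exists_nodup_chain_aux {R : V → V → Prop} :
    ∀ (l : List V) (a : V), List.Chain R a l →
      ∃ l' : List V, List.Chain R a l' ∧
        (a :: l').getLast (by simp) = (a :: l).getLast (by simp) ∧ (a :: l').Nodup
  | [], a, _ => ⟨[], List.Chain.nil, rfl, by simp⟩
  | b :: m, a, hc => by
      obtain ⟨hab, hcm⟩ := List.chain_cons.1 hc
      obtain ⟨m', hm'c, hm'l, hm'nd⟩ := exists_nodup_chain_aux m b hcm
      by_cases haq : a ∈ b :: m'
      · obtain ⟨q, hq1, hq2, hq3⟩ := chain_suffix_from m' b hm'c hm'nd a haq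
        exact ⟨q, hq1, (hq2.trans hm'l).trans (List.getLast_cons (by simp)).symm, hq3⟩
      · exact ⟨b :: m', List.chain_cons.2 ⟨hab, hm'c⟩,
          (List.getLast_cons (by simp)).trans (hm'l.trans (List.getLast_cons (by simp)).symm),
          List.nodup_cons.2 ⟨haq, hm'nd⟩⟩

lemma exists_nodup_chain {R : V → V → Prop} {a b : V}
    (h : Relation.ReflTransGen R a b) :
    ∃ l : List V, List.Chain R a l ∧
      (a :: l).getLast (by simp) = b ∧ (a :: l).Nodup := by
  obtain ⟨l, hc, hl⟩ := List.exists_isChain_cons_of_relationReflTransGen h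
  obtain ⟨l', h1, h2, h3⟩ := exists_nodup_chain_aux l a hc
  exact ⟨l', h1, by rw [h2, hl], h3⟩

end Abstract

/-! ### Module 4 : augmentation along a path -/

section PathMod

variable {V : Type*} [Fintype V] [DecidableEq V]

def stepMod (h : V → V → ℤ) (x y : V) : V → V → ℤ :=
  if 0 < h x y then (fun a b => if a = x ∧ b = y then -1 else 0)
  else (fun a b => if a = y ∧ b = x then 1 else 0)

def pathMod (h : V → V → ℤ) : List V → V → V → ℤ
  | x :: y :: r => fun a b => stepMod h x y a b + pathMod h (y :: r) a b
  | _ => fun _ _ => 0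

lemma sum_ite_pair (c d : V) (z : ℤ) (a : V) :
    (∑ m, (if a = c ∧ m = d then z else 0)) = if a = c then z else 0 := by
  by_cases h : a = c
  · simp only [h, true_and, if_true]
    rw [Finset.sum_ite_eq' Finset.univ d (fun _ => z)]
    simp
  · simp [h]

lemma sum_ite_pair' (c d : V) (z : ℤ) (b : V) :
    (∑ m, (if m = c ∧ b = d then z else 0)) = if b = d then z else 0 := by
  by_cases h : b = d
  · simp only [h, and_true, if_true]
    rw [Finset.sum_ite_eq' Finset.univ c (fun _ => z)]
    simp
  · simp [h]

lemma stepMod_div (h : V → V → ℤ) (x y n : V) :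
    (∑ m, stepMod h x y n m) - (∑ m, stepMod h x y m n) =
      (if n = y then 1 else 0) - (if n = x then 1 else 0) := by
  by_cases hxy : 0 < h x y
  · simp only [stepMod, if_pos hxy]
    rw [sum_ite_pair x y (-1) n, sum_ite_pair' x y (-1) n]
    all_goals (split_ifs <;> ring)
  · simp only [stepMod, if_neg hxy]
    rw [sum_ite_pair y x 1 n, sum_ite_pair' y x 1 n]
    all_goals (split_ifs <;> ring)

lemma pathMod_div (h : V → V → ℤ) :
    ∀ (l : List V) (x : V) (n : V),
      (∑ m, pathMod h (x :: l) n m) - (∑ m, pathMod h (x :: l) m n) =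
        (if n = (x :: l).getLast (by simp) then 1 else 0) - (if n = x then 1 else 0)
  | [], x, n => by simp [pathMod]; split_ifs <;> simp_all
  | y :: r, x, n => by
      have IH := pathMod_div h r y n
      have e : pathMod h (x :: y :: r) = fun a b => stepMod h x y a b + pathMod h (y :: r) a b := rfl
      rw [e]
      simp only [Finset.sum_add_distrib]
      have := stepMod_div h x y n
      have hlast : (x :: y :: r).getLast (by simp) = (y :: r).getLast (by simp) :=
        List.getLast_cons (by simp)
      rw [hlast]
      omega

lemma pathMod_support (h : V → V → ℤ) :
    ∀ (l : List V) (x : V) (a b : V), pathMod h (x :: l) a b ≠ 0 →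
      a ∈ x :: l ∧ b ∈ x :: l
  | [], x, a, b, hab => by simp [pathMod] at hab
  | y :: r, x, a, b, hab => by
      have e : pathMod h (x :: y :: r) a b = stepMod h x y a b + pathMod h (y :: r) a b := rfl
      rw [e] at hab
      by_cases h1 : pathMod h (y :: r) a b = 0
      · rw [h1, add_zero] at hab
        by_cases hxy : 0 < h x y
        · simp only [stepMod, if_pos hxy] at hab
          split at hab
          · rename_i hc
            exact ⟨by simp [hc.1], by simp [hc.2]⟩
          · exact absurd rfl hab
        · simp only [stepMod, if_neg hxy] at hab
          split at hab
          · rename_i hc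
            exact ⟨by simp [hc.1], by simp [hc.2]⟩
          · exact absurd rfl hab
      · obtain ⟨ha, hb⟩ := pathMod_support h r y a b h1
        exact ⟨List.mem_cons_of_mem _ ha, List.mem_cons_of_mem _ hb⟩

lemma pathMod_tri (h : V → V → ℤ) :
    ∀ (l : List V) (x : V),
      List.Chain (fun a b => 0 < h a b ∨ h b a < 0) x l → (x :: l).Nodup →
      ∀ a b, pathMod h (x :: l) a b = 0 ∨
        (pathMod h (x :: l) a b = -1 ∧ 0 < h a b) ∨
        (pathMod h (x :: l) a b = 1 ∧ h a b < 0)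
  | [], x, _, _, a, b => Or.inl (by simp [pathMod])
  | y :: r, x, hch, hnd, a, b => by
      obtain ⟨hxy, hch'⟩ := List.chain_cons.1 hch
      have hnd' : (y :: r).Nodup := hnd.of_cons
      have hx : x ∉ y :: r := (List.nodup_cons.1 hnd).1
      have IH := pathMod_tri h r y hch' hnd' a b
      have e : pathMod h (x :: y :: r) a b = stepMod h x y a b + pathMod h (y :: r) a b := rfl
      rw [e]
      by_cases hpos : 0 < h x y
      · have es : stepMod h x y a b = if a = x ∧ b = y then -1 else 0 := by
          unfold stepMod
          rw [if_pos hpos]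
        by_cases hc : a = x ∧ b = y
        · have hz : pathMod h (y :: r) a b = 0 := by
            by_contra hnz
            exact hx (hc.1 ▸ (pathMod_support h r y a b hnz).1)
          rw [es, if_pos hc, hz]
          exact Or.inr (Or.inl ⟨by ring, hc.1 ▸ hc.2 ▸ hpos⟩)
        · rw [es, if_neg hc, zero_add]
          exact IH
      · have hneg : h y x < 0 := hxy.resolve_left hpos
        have es : stepMod h x y a b = if a = y ∧ b = x then 1 else 0 := by
          unfold stepMod
          rw [if_neg hpos]
        by_cases hc : a = y ∧ b = x
        · have hz : pathMod h (y :: r) a b = 0 := by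
            by_contra hnz
            exact hx (hc.2 ▸ (pathMod_support h r y a b hnz).2)
          rw [es, if_pos hc, hz]
          exact Or.inr (Or.inr ⟨by ring, by rw [hc.1, hc.2]; exact hneg⟩)
        · rw [es, if_neg hc, zero_add]
          exact IH

end PathMod

/-! ### The augmentation lemma -/

lemma augment (f g : Node α → Node α → ℤ) (hf : IsFlow f) (hg : IsFlow g)
    (hlt : value g + 2 ≤ value f) :
    ∃ f' g' : Node α → Node α → ℤ, IsFlow f' ∧ IsFlow g' ∧
      value f' = value f - 1 ∧ value g' = value g + 1 ∧
      profit f' + profit g' = profit f + profit g := by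
  classical
  set h : Node α → Node α → ℤ := fun a b => f a b - g a b with hh
  have hcons : ∀ n, n ≠ nS α → n ≠ nT α → (∑ m, h m n) = ∑ m, h n m := by
    rintro (p | b) hns hnt
    · have h1 := hf.cons p
      have h2 := hg.cons p
      rw [consAt, inAt, outAt] at h1 h2
      simp only [hh, Finset.sum_sub_distrib, h1, h2]
    · cases b
      · exact absurd rfl hns
      · exact absurd rfl hnt
  have hdiv : (∑ m, h m (nS α)) < ∑ m, h (nS α) m := by
    have h1 : (∑ m, h m (nS α)) = inAt f (nS α) - inAt g (nS α) := by
      simp [hh, inAt, Finset.sum_sub_distrib]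
    have h2 : (∑ m, h (nS α) m) = value f - value g := by
      simp [hh, value, outAt, Finset.sum_sub_distrib]
    rw [h1, h2, inAt_nS hf.supp, inAt_nS hg.supp]
    omega
  obtain ⟨l, hlch, hllast, hlnd⟩ := exists_nodup_chain (exists_reach h (nS α) (nT α) hcons hdiv)
  set d : Node α → Node α → ℤ := pathMod h (nS α :: l) with hd
  have tri : ∀ a b : Node α, d a b = 0 ∨ (d a b = -1 ∧ 0 < h a b) ∨
      (d a b = 1 ∧ h a b < 0) := pathMod_tri h l (nS α) hlch hlnd
  have hcaps : ∀ a b : Node α, (0 ≤ f a b + d a b ∧ f a b + d a b ≤ 1) ∧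
      (0 ≤ g a b - d a b ∧ g a b - d a b ≤ 1) := by
    intro a b
    have hfc := hf.capped a b
    have hgc := hg.capped a b
    rcases tri a b with h0 | ⟨h1, hside⟩ | ⟨h1, hside⟩
    · rw [h0]
      omega
    · simp only [hh] at hside
      rw [h1]
      omega
    · simp only [hh] at hside
      rw [h1]
      omega
  have hf'cap : IsCapped (fun a b => f a b + d a b) := fun a b => (hcaps a b).1
  have hg'cap : IsCapped (fun a b => g a b - d a b) := fun a b => (hcaps a b).2
  have hdsupp : ∀ a b, d a b ≠ 0 → E a b := by
    intro a b hab
    rcases tri a b with h0 | ⟨h1, hside⟩ | ⟨h1, hside⟩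
    · exact absurd h0 hab
    · refine hf.supp a b (fun h2 => ?_)
      have := hg.capped a b
      simp only [hh] at hside
      omega
    · refine hg.supp a b (fun h2 => ?_)
      have := hf.capped a b
      simp only [hh] at hside
      omega
  have hf'supp : IsSupp (fun a b => f a b + d a b) := by
    intro a b hab
    simp only at hab
    by_cases hd0 : d a b = 0
    · exact hf.supp a b (by rw [hd0, add_zero] at hab; exact hab)
    · exact hdsupp a b hd0
  have hg'supp : IsSupp (fun a b => g a b - d a b) := by
    intro a b hab
    simp only at hab
    by_cases hd0 : d a b = 0
    · exact hg.supp a b (by rw [hd0, sub_zero] at hab; exact hab)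
    · exact hdsupp a b hd0
  -- divergence of d
  have hddiv : ∀ n : Node α, (∑ m, d n m) - (∑ m, d m n) =
      (if n = nT α then 1 else 0) - (if n = nS α then 1 else 0) := by
    intro n
    have h2 := pathMod_div h l (nS α) n
    rw [show ((nS α :: l).getLast (by simp)) = nT α from hllast] at h2
    exact h2
  have hf'cons : ∀ p : α × Bool, consAt (fun a b => f a b + d a b) (Sum.inl p) := by
    intro p
    have h1 := hf.cons p
    rw [consAt, inAt, outAt] at h1 ⊢
    have h2 := hddiv (Sum.inl p)
    rw [if_neg (by simp [nT]), if_neg (by simp [nS])] at h2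
    simp only [Finset.sum_add_distrib]
    omega
  have hg'cons : ∀ p : α × Bool, consAt (fun a b => g a b - d a b) (Sum.inl p) := by
    intro p
    have h1 := hg.cons p
    rw [consAt, inAt, outAt] at h1 ⊢
    have h2 := hddiv (Sum.inl p)
    rw [if_neg (by simp [nT]), if_neg (by simp [nS])] at h2
    simp only [Finset.sum_sub_distrib]
    omega
  -- value changes
  have hdin : (∑ m, d m (nS α)) = 0 := by
    refine Finset.sum_eq_zero (fun m _ => ?_)
    by_contra h0
    exact not_E_to_nS (hdsupp m (nS α) h0)
  have hdout : (∑ m, d (nS α) m) = -1 := by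
    have h2 := hddiv (nS α)
    rw [if_neg nS_ne_nT, if_pos rfl] at h2
    omega
  refine ⟨fun a b => f a b + d a b, fun a b => g a b - d a b,
    ⟨hf'cap, hf'supp, hf'cons⟩, ⟨hg'cap, hg'supp, hg'cons⟩, ?_, ?_, ?_⟩
  · show (∑ m, (f (nS α) m + d (nS α) m)) = value f - 1
    rw [Finset.sum_add_distrib, hdout]
    rfl
  · show (∑ m, (g (nS α) m - d (nS α) m)) = value g + 1
    rw [Finset.sum_sub_distrib, hdout]
    show value g - (-1) = value g + 1
    ring
  · show (∑ v, (f (vi v) (vo v) + d (vi v) (vo v))) + (∑ v, (g (vi v) (vo v) - d (vi v) (vo v))) = _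
    rw [Finset.sum_add_distrib, Finset.sum_sub_distrib]
    show profit f + _ + (profit g - _) = profit f + profit g
    ring

/-! ### Module 5 : extracting chains from flows -/

def zeroed (f : Node α → Node α → ℤ) (p q : Node α) : Node α → Node α → ℤ :=
  fun a b => if a = p ∧ b = q then 0 else f a b

lemma zeroed_eq (f : Node α → Node α → ℤ) (p q a b : Node α) :
    zeroed f p q a b = f a b - (if a = p ∧ b = q then f p q else 0) := by
  unfold zeroed
  split_ifs with hc
  · rcases hc with ⟨rfl, rfl⟩
    ring
  · ring

lemma zeroed_self (f : Node α → Node α → ℤ) (p q : Node α) :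
    zeroed f p q p q = 0 := by simp [zeroed]

lemma zeroed_ne (f : Node α → Node α → ℤ) {p q a b : Node α}
    (h : ¬(a = p ∧ b = q)) : zeroed f p q a b = f a b := by
  simp [zeroed, h]

lemma zeroed_le (f : Node α → Node α → ℤ) (p q : Node α)
    (h0 : ∀ a b, 0 ≤ f a b) : ∀ a b, 0 ≤ zeroed f p q a b ∧ zeroed f p q a b ≤ f a b := by
  intro a b
  unfold zeroed
  split_ifs
  · exact ⟨le_refl 0, h0 a b⟩
  · exact ⟨h0 a b, le_refl _⟩

lemma inAt_zeroed (f : Node α → Node α → ℤ) (p q n : Node α) :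
    inAt (zeroed f p q) n = inAt f n - (if n = q then f p q else 0) := by
  unfold inAt
  rw [Finset.sum_congr rfl (fun m _ => zeroed_eq f p q m n), Finset.sum_sub_distrib]
  rw [sum_ite_pair' p q (f p q) n]

lemma outAt_zeroed (f : Node α → Node α → ℤ) (p q n : Node α) :
    outAt (zeroed f p q) n = outAt f n - (if n = p then f p q else 0) := by
  unfold outAt
  rw [Finset.sum_congr rfl (fun m _ => zeroed_eq f p q n m), Finset.sum_sub_distrib]
  rw [sum_ite_pair p q (f p q) n]

lemma cov_zeroed_diag (f : Node α → Node α → ℤ) (v : α) :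
    Cov (zeroed f (vi v) (vo v)) = Cov f \ {v} := by
  ext u
  simp only [Cov, Finset.mem_filter, Finset.mem_univ, true_and, Finset.mem_sdiff,
    Finset.mem_singleton]
  by_cases hu : u = v
  · subst hu
    rw [zeroed_self]
    simp
  · rw [zeroed_ne f (fun hc => hu (vi_inj hc.1))]
    simp [hu]

lemma cov_zeroed_other (f : Node α → Node α → ℤ) {p q : Node α}
    (h : ∀ u : α, ¬(p = vi u ∧ q = vo u)) :
    Cov (zeroed f p q) = Cov f := by
  ext u
  simp only [Cov, Finset.mem_filter, Finset.mem_univ, true_and]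
  rw [zeroed_ne f (fun hc => h u ⟨hc.1.symm, hc.2.symm⟩)]

open scoped Classical

/-- Forward trace removal. -/
lemma FWD : ∀ (N : ℕ) (v : α) (n₀ : Node α) (f : Node α → Node α → ℤ),
    (Finset.univ.filter (fun u => v < u)).card ≤ N →
    (∀ a b, 0 ≤ f a b ∧ f a b ≤ 1) → IsSupp f →
    (∀ u : α, v ≤ u → n₀ ≠ vo u) → (∀ u : α, v < u → n₀ ≠ vi u) →
    (∀ n : Node α, n ≠ nS α → n ≠ nT α → n ≠ n₀ → n ≠ vo v → consAt f n) →
    inAt f (vo v) + 1 = outAt f (vo v) →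
    ∃ (T : Finset α) (g : Node α → Node α → ℤ),
      (∀ a b, 0 ≤ g a b ∧ g a b ≤ f a b) ∧
      (∀ n : Node α, n ≠ nS α → n ≠ nT α → n ≠ n₀ → consAt g n) ∧
      (∀ u ∈ T, v < u) ∧ IsChain (· ≤ ·) (T : Set α) ∧
      Cov g = Cov f \ T ∧ T ⊆ Cov f ∧
      (∀ m, g (nS α) m = f (nS α) m) ∧
      (∀ (u : α) (m : Node α), u ≤ v → g m (vi u) = f m (vi u)) := by
  intro N
  induction N using Nat.strong_induction_on with
  | _ N IH =>
  intro v n₀ f hcard hcap hsupp hn₀1 hn₀2 hcons hdef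
  have hex : ∃ m, 1 ≤ f (vo v) m := by
    by_contra hc
    push_neg at hc
    have hz : outAt f (vo v) ≤ 0 :=
      Finset.sum_nonpos (fun m _ => by have := hcap (vo v) m; have := hc m; omega)
    have h1 : inAt f (vo v) = f (vi v) (vo v) := inAt_vo hsupp v
    have := hcap (vi v) (vo v)
    omega
  obtain ⟨m₀, hm₀⟩ := hex
  have hE := hsupp _ _ (show f (vo v) m₀ ≠ 0 by omega)
  have hm₀1 : f (vo v) m₀ = 1 := by have := hcap (vo v) m₀; omega
  clear hm₀
  rcases E_vo_out hE with rfl | ⟨w, hvw, rfl⟩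
  · -- edge to the sink
    refine ⟨∅, zeroed f (vo v) (nT α),
      zeroed_le f _ _ (fun a b => (hcap a b).1), ?_, by simp, ?_, ?_, by simp, ?_, ?_⟩
    · intro n hnS hnT hn₀
      by_cases hn : n = vo v
      · subst hn
        rw [consAt, inAt_zeroed, outAt_zeroed, if_neg (vo_ne_nT v), if_pos rfl, hm₀1]
        omega
      · rw [consAt, inAt_zeroed, outAt_zeroed, if_neg hnT, if_neg hn]
        have hc := hcons n hnS hnT hn₀ hn
        rw [consAt] at hc
        omega
    · rw [Finset.coe_empty]
      exact Set.pairwise_empty _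
    · rw [cov_zeroed_other f (fun u hc => vi_ne_vo u v hc.1.symm)]
      · simp
    · intro m
      exact zeroed_ne f (fun hc => vo_ne_nS v hc.1.symm)
    · intro u m hu
      exact zeroed_ne f (fun hc => vi_ne_nT u hc.2)
  · -- edge to (vi w), v < w
    have hwnotv : w ≠ v := ne_of_gt hvw
    have hconsw : consAt f (vi w) :=
      hcons (vi w) (vi_ne_nS w) (vi_ne_nT w) (Ne.symm (hn₀2 w hvw)) (vi_ne_vo w v)
    have hinw : inAt f (vi w) = f (vi w) (vo w) := by
      rw [consAt, outAt_vi hsupp] at hconsw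
      rw [inAt] at hconsw ⊢
      omega
    have hgew : (1:ℤ) ≤ inAt f (vi w) := by
      have h2 : f (vo v) (vi w) ≤ ∑ m, f m (vi w) :=
        Finset.single_le_sum (f := fun m => f m (vi w))
          (fun m _ => (hcap m (vi w)).1) (Finset.mem_univ (vo v))
      rw [inAt]
      omega
    have hdiagw : f (vi w) (vo w) = 1 := by
      have := hcap (vi w) (vo w)
      omega
    have hf2ne : zeroed f (vo v) (vi w) (vi w) (vo w) = f (vi w) (vo w) :=
      zeroed_ne f (by rintro ⟨h1, -⟩; exact vi_ne_vo w v h1)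
    have hcap2 : ∀ a b, 0 ≤ zeroed f (vo v) (vi w) a b :=
      fun a b => (zeroed_le f _ _ (fun a b => (hcap a b).1) a b).1
    have hf₃le : ∀ a b,
        0 ≤ zeroed (zeroed f (vo v) (vi w)) (vi w) (vo w) a b ∧
        zeroed (zeroed f (vo v) (vi w)) (vi w) (vo w) a b ≤ f a b := by
      intro a b
      have e1 := zeroed_le f (vo v) (vi w) (fun a b => (hcap a b).1) a b
      have e2 := zeroed_le (zeroed f (vo v) (vi w)) (vi w) (vo w) hcap2 a b
      exact ⟨e2.1, le_trans e2.2 e1.2⟩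
    have hin3 : ∀ n, inAt (zeroed (zeroed f (vo v) (vi w)) (vi w) (vo w)) n =
        inAt f n - (if n = vi w then 1 else 0) - (if n = vo w then 1 else 0) := by
      intro n
      rw [inAt_zeroed, inAt_zeroed, hf2ne, hdiagw, hm₀1]
    have hout3 : ∀ n, outAt (zeroed (zeroed f (vo v) (vi w)) (vi w) (vo w)) n =
        outAt f n - (if n = vo v then 1 else 0) - (if n = vi w then 1 else 0) := by
      intro n
      rw [outAt_zeroed, outAt_zeroed, hf2ne, hdiagw, hm₀1]
    have hne1 : vo v ≠ vi w := Ne.symm (vi_ne_vo w v)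
    have hne2 : vo (α := α) v ≠ vo w := fun hc => hwnotv (vo_inj hc).symm
    have hne3 : vi (α := α) w ≠ vo w := vi_ne_vo w w
    have hne4 : vi w ≠ vo v := vi_ne_vo w v
    -- conservation of f₃ away from {nS, nT, n₀, vo w}
    have hcons3 : ∀ n : Node α, n ≠ nS α → n ≠ nT α → n ≠ n₀ → n ≠ vo w →
        consAt (zeroed (zeroed f (vo v) (vi w)) (vi w) (vo w)) n := by
      intro n hnS hnT hn₀ hnw
      rw [consAt, hin3, hout3]
      by_cases hnv : n = vo v
      · subst hnv
        try simp only [if_neg hne1, if_neg hne2, if_pos rfl, eq_self_iff_true, if_true]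
        omega
      · by_cases hnw' : n = vi w
        · subst hnw'
          have hc := hconsw
          rw [consAt] at hc
          try simp only [if_pos rfl, if_neg hne3, if_neg hne4, eq_self_iff_true, if_true]
          omega
        · have hc := hcons n hnS hnT hn₀ hnv
          rw [consAt] at hc
          try simp only [if_neg hnw', if_neg hnw, if_neg hnv]
          omega
    -- deficit at (vo w)
    have hdef3 : inAt (zeroed (zeroed f (vo v) (vi w)) (vi w) (vo w)) (vo w) + 1 =
        outAt (zeroed (zeroed f (vo v) (vi w)) (vi w) (vo w)) (vo w) := by
      rw [hin3, hout3]
      have hc := hcons (vo w) (vo_ne_nS w) (vo_ne_nT w) (Ne.symm (hn₀1 w hvw.le))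
        (fun hc => hwnotv (vo_inj hc))
      rw [consAt] at hc
      try simp only [if_neg (Ne.symm hne3), if_pos rfl, if_neg (Ne.symm hne2), eq_self_iff_true, if_true]
      omega
    -- apply IH at w
    have hcmlt : (Finset.univ.filter (fun u => w < u)).card < N := by
      have hss : (Finset.univ.filter (fun u => w < u)) ⊂ (Finset.univ.filter (fun u => v < u)) := by
        constructor
        · intro u hu
          simp only [Finset.mem_filter, Finset.mem_univ, true_and] at hu ⊢
          exact hvw.trans hu
        · intro hcon
          have := hcon (Finset.mem_filter.2 ⟨Finset.mem_univ w, hvw⟩)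
          simp only [Finset.mem_filter, Finset.mem_univ, true_and] at this
          exact lt_irrefl w this
      have := Finset.card_lt_card hss
      omega
    obtain ⟨T', g, hgle, hgcons, hT'gt, hT'chain, hgcov, hT'sub, hgnS, hgvi⟩ :=
      IH _ hcmlt w n₀ (zeroed (zeroed f (vo v) (vi w)) (vi w) (vo w)) (le_refl _)
        (fun a b => ⟨(hf₃le a b).1, le_trans (hf₃le a b).2 (hcap a b).2⟩)
        (fun a b hne => hsupp a b (by have := hf₃le a b; omega))
        (fun u hu => hn₀1 u (le_of_lt (lt_of_lt_of_le hvw hu)))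
        (fun u hu => hn₀2 u (hvw.trans hu))
        hcons3 hdef3
    have hcov3 : Cov (zeroed (zeroed f (vo v) (vi w)) (vi w) (vo w)) = Cov f \ {w} := by
      rw [cov_zeroed_diag, cov_zeroed_other f (fun u hc => vi_ne_vo u v hc.1.symm)]
    refine ⟨insert w T', g, ?_, hgcons, ?_, ?_, ?_, ?_, ?_, ?_⟩
    · exact fun a b => ⟨(hgle a b).1, le_trans (hgle a b).2 (hf₃le a b).2⟩
    · intro u hu
      rcases Finset.mem_insert.1 hu with rfl | hu'
      · exact hvw
      · exact hvw.trans (hT'gt u hu')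
    · rw [Finset.coe_insert]
      exact hT'chain.insert (fun b hb _ => Or.inl (le_of_lt (hT'gt b hb)))
    · rw [hgcov, hcov3]
      ext u
      simp only [Finset.mem_sdiff, Finset.mem_singleton, Finset.mem_insert]
      tauto
    · intro u hu
      rcases Finset.mem_insert.1 hu with rfl | hu'
      · exact Finset.mem_filter.2 ⟨Finset.mem_univ _, hdiagw⟩
      · have := hT'sub hu'
        rw [hcov3] at this
        exact (Finset.mem_sdiff.1 this).1
    · intro m
      rw [hgnS m, zeroed_ne _ (fun hc => vi_ne_nS w hc.1.symm),
        zeroed_ne _ (fun hc => vo_ne_nS v hc.1.symm)]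
    · intro u m hu
      rw [hgvi u m (le_of_lt (lt_of_le_of_lt hu hvw)),
        zeroed_ne _ (fun hc => vi_ne_vo u w hc.2),
        zeroed_ne _ (fun hc => (lt_of_le_of_lt hu hvw).ne (vi_inj hc.2))]

/-- Backward trace removal. -/
lemma BWD : ∀ (N : ℕ) (v : α) (f : Node α → Node α → ℤ),
    (Finset.univ.filter (fun u => u < v)).card ≤ N →
    (∀ a b, 0 ≤ f a b ∧ f a b ≤ 1) → IsSupp f →
    (∀ n : Node α, n ≠ nS α → n ≠ nT α → n ≠ vi v → consAt f n) →
    outAt f (vi v) + 1 = inAt f (vi v) →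
    ∃ (T : Finset α) (g : Node α → Node α → ℤ),
      (∀ a b, 0 ≤ g a b ∧ g a b ≤ f a b) ∧
      (∀ n : Node α, n ≠ nS α → n ≠ nT α → consAt g n) ∧
      (∀ u ∈ T, u < v) ∧ IsChain (· ≤ ·) (T : Set α) ∧
      Cov g = Cov f \ T ∧ T ⊆ Cov f ∧
      (∃ w₀ : α, f (nS α) (vi w₀) = 1 ∧ g (nS α) (vi w₀) = 0 ∧
        ∀ m, m ≠ vi w₀ → g (nS α) m = f (nS α) m) := by
  intro N
  induction N using Nat.strong_induction_on with
  | _ N IH =>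
  intro v f hcard hcap hsupp hcons hdef
  have hex : ∃ m, 1 ≤ f m (vi v) := by
    by_contra hc
    push_neg at hc
    have hz : inAt f (vi v) ≤ 0 :=
      Finset.sum_nonpos (fun m _ => by have := hcap m (vi v); have := hc m; omega)
    have h1 : outAt f (vi v) = f (vi v) (vo v) := outAt_vi hsupp v
    have := hcap (vi v) (vo v)
    omega
  obtain ⟨m₀, hm₀⟩ := hex
  have hE := hsupp _ _ (show f m₀ (vi v) ≠ 0 by omega)
  have hm₀1 : f m₀ (vi v) = 1 := by have := hcap m₀ (vi v); omega
  clear hm₀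
  rcases E_vi_in hE with rfl | ⟨u, huv, rfl⟩
  · -- in-edge from the source
    refine ⟨∅, zeroed f (nS α) (vi v),
      zeroed_le f _ _ (fun a b => (hcap a b).1), ?_, by simp, ?_, ?_, by simp, ?_⟩
    · intro n hnS hnT
      by_cases hn : n = vi v
      · subst hn
        rw [consAt, inAt_zeroed, outAt_zeroed, if_pos rfl, if_neg hnS, hm₀1]
        omega
      · rw [consAt, inAt_zeroed, outAt_zeroed, if_neg hn, if_neg hnS]
        have hc := hcons n hnS hnT hn
        rw [consAt] at hc
        omega
    · rw [Finset.coe_empty]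
      exact Set.pairwise_empty _
    · rw [cov_zeroed_other f (fun x hc => vi_ne_nS x hc.1.symm)]
      simp
    · refine ⟨v, hm₀1, zeroed_self f _ _, fun m hm => ?_⟩
      exact zeroed_ne f (fun hc => hm hc.2)
  · -- in-edge from (vo u), u < v
    have hunotv : u ≠ v := ne_of_lt huv
    have hconsu : consAt f (vo u) :=
      hcons (vo u) (vo_ne_nS u) (vo_ne_nT u) (Ne.symm (vi_ne_vo v u))
    have hinu : inAt f (vo u) = f (vi u) (vo u) := inAt_vo hsupp u
    have hgeu : (1:ℤ) ≤ outAt f (vo u) := by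
      have h2 : f (vo u) (vi v) ≤ ∑ m, f (vo u) m :=
        Finset.single_le_sum (f := fun m => f (vo u) m)
          (fun m _ => (hcap (vo u) m).1) (Finset.mem_univ (vi v))
      rw [outAt]
      omega
    have hdiagu : f (vi u) (vo u) = 1 := by
      have := hcap (vi u) (vo u)
      rw [consAt] at hconsu
      omega
    have hf2ne : zeroed f (vo u) (vi v) (vi u) (vo u) = f (vi u) (vo u) :=
      zeroed_ne f (by rintro ⟨h1, -⟩; exact vi_ne_vo u u h1)
    have hcap2 : ∀ a b, 0 ≤ zeroed f (vo u) (vi v) a b :=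
      fun a b => (zeroed_le f _ _ (fun a b => (hcap a b).1) a b).1
    have hf₃le : ∀ a b,
        0 ≤ zeroed (zeroed f (vo u) (vi v)) (vi u) (vo u) a b ∧
        zeroed (zeroed f (vo u) (vi v)) (vi u) (vo u) a b ≤ f a b := by
      intro a b
      have e1 := zeroed_le f (vo u) (vi v) (fun a b => (hcap a b).1) a b
      have e2 := zeroed_le (zeroed f (vo u) (vi v)) (vi u) (vo u) hcap2 a b
      exact ⟨e2.1, le_trans e2.2 e1.2⟩
    have hin3 : ∀ n, inAt (zeroed (zeroed f (vo u) (vi v)) (vi u) (vo u)) n =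
        inAt f n - (if n = vi v then 1 else 0) - (if n = vo u then 1 else 0) := by
      intro n
      rw [inAt_zeroed, inAt_zeroed, hf2ne, hdiagu, hm₀1]
    have hout3 : ∀ n, outAt (zeroed (zeroed f (vo u) (vi v)) (vi u) (vo u)) n =
        outAt f n - (if n = vo u then 1 else 0) - (if n = vi u then 1 else 0) := by
      intro n
      rw [outAt_zeroed, outAt_zeroed, hf2ne, hdiagu, hm₀1]
    have hne1 : vi (α := α) v ≠ vo u := vi_ne_vo v u
    have hne2 : vi (α := α) v ≠ vi u := fun hc => hunotv (vi_inj hc).symm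
    have hne3 : vo (α := α) u ≠ vi u := Ne.symm (vi_ne_vo u u)
    have hne4 : vo (α := α) u ≠ vo (α := α) u → False := fun hc => hc rfl
    have hcons3 : ∀ n : Node α, n ≠ nS α → n ≠ nT α → n ≠ vi u →
        consAt (zeroed (zeroed f (vo u) (vi v)) (vi u) (vo u)) n := by
      intro n hnS hnT hnu
      rw [consAt, hin3, hout3]
      by_cases hnv : n = vi v
      · subst hnv
        try simp only [if_pos rfl, if_neg hne1, if_neg hne2, eq_self_iff_true, if_true]
        omega
      · by_cases hnu' : n = vo u
        · subst hnu'
          rw [consAt] at hconsu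
          try simp only [if_pos rfl, if_neg (Ne.symm hne1), if_neg hne3, eq_self_iff_true, if_true]
          omega
        · have hc := hcons n hnS hnT hnv
          rw [consAt] at hc
          try simp only [if_neg hnv, if_neg hnu', if_neg hnu]
          omega
    have hdef3 : outAt (zeroed (zeroed f (vo u) (vi v)) (vi u) (vo u)) (vi u) + 1 =
        inAt (zeroed (zeroed f (vo u) (vi v)) (vi u) (vo u)) (vi u) := by
      rw [hin3, hout3]
      have hc := hcons (vi u) (vi_ne_nS u) (vi_ne_nT u) (Ne.symm hne2)
      rw [consAt] at hc
      try simp only [if_neg (Ne.symm hne2), if_neg (Ne.symm hne3), if_pos rfl,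
        eq_self_iff_true, if_true]
      omega
    have hcmlt : (Finset.univ.filter (fun x => x < u)).card < N := by
      have hss : (Finset.univ.filter (fun x => x < u)) ⊂ (Finset.univ.filter (fun x => x < v)) := by
        constructor
        · intro x hx
          simp only [Finset.mem_filter, Finset.mem_univ, true_and] at hx ⊢
          exact hx.trans huv
        · intro hcon
          have := hcon (Finset.mem_filter.2 ⟨Finset.mem_univ u, huv⟩)
          simp only [Finset.mem_filter, Finset.mem_univ, true_and] at this
          exact lt_irrefl u this
      have := Finset.card_lt_card hss
      omega
    obtain ⟨T', g, hgle, hgcons, hT'lt, hT'chain, hgcov, hT'sub, hsrow⟩ :=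
      IH _ hcmlt u (zeroed (zeroed f (vo u) (vi v)) (vi u) (vo u)) (le_refl _)
        (fun a b => ⟨(hf₃le a b).1, le_trans (hf₃le a b).2 (hcap a b).2⟩)
        (fun a b hne => hsupp a b (by have := hf₃le a b; omega))
        hcons3 hdef3
    have hcov3 : Cov (zeroed (zeroed f (vo u) (vi v)) (vi u) (vo u)) = Cov f \ {u} := by
      rw [cov_zeroed_diag, cov_zeroed_other f (fun x hc => vi_ne_vo x u hc.1.symm)]
    have hrow3 : ∀ m, zeroed (zeroed f (vo u) (vi v)) (vi u) (vo u) (nS α) m = f (nS α) m := by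
      intro m
      rw [zeroed_ne _ (fun hc => vi_ne_nS u hc.1.symm),
        zeroed_ne _ (fun hc => vo_ne_nS u hc.1.symm)]
    refine ⟨insert u T', g, ?_, hgcons, ?_, ?_, ?_, ?_, ?_⟩
    · exact fun a b => ⟨(hgle a b).1, le_trans (hgle a b).2 (hf₃le a b).2⟩
    · intro x hx
      rcases Finset.mem_insert.1 hx with rfl | hx'
      · exact huv
      · exact (hT'lt x hx').trans huv
    · rw [Finset.coe_insert]
      exact hT'chain.insert (fun b hb _ => Or.inr (le_of_lt (hT'lt b hb)))
    · rw [hgcov, hcov3]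
      ext x
      simp only [Finset.mem_sdiff, Finset.mem_singleton, Finset.mem_insert]
      tauto
    · intro x hx
      rcases Finset.mem_insert.1 hx with rfl | hx'
      · exact Finset.mem_filter.2 ⟨Finset.mem_univ _, hdiagu⟩
      · have := hT'sub hx'
        rw [hcov3] at this
        exact (Finset.mem_sdiff.1 this).1
    · obtain ⟨w₀, hw1, hw2, hw3⟩ := hsrow
      exact ⟨w₀, by rw [← hrow3 (vi w₀)]; exact hw1, hw2,
        fun m hm => by rw [hw3 m hm, hrow3 m]⟩

/-- Extract a chain from a flow with positive profit, lowering the value by 1. -/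
lemma extractChain (f : Node α → Node α → ℤ) (hf : IsFlow f) {v : α}
    (hv : v ∈ Cov f) :
    ∃ (T : Finset α) (g : Node α → Node α → ℤ), IsFlow g ∧
      IsChain (· ≤ ·) (T : Set α) ∧ v ∈ T ∧
      Cov g = Cov f \ T ∧ T ⊆ Cov f ∧ value g = value f - 1 := by
  have hdiag : f (vi v) (vo v) = 1 := (Finset.mem_filter.1 hv).2
  have hcap := hf.capped
  have hf₁le := zeroed_le f (vi v) (vo v) (fun a b => (hcap a b).1)
  have hin1 : ∀ n, inAt (zeroed f (vi v) (vo v)) n =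
      inAt f n - (if n = vo v then 1 else 0) := by
    intro n
    rw [inAt_zeroed, hdiag]
  have hout1 : ∀ n, outAt (zeroed f (vi v) (vo v)) n =
      outAt f n - (if n = vi v then 1 else 0) := by
    intro n
    rw [outAt_zeroed, hdiag]
  have hconsvov : consAt f (vo v) := hf.cons (v, true)
  have hconsviv : consAt f (vi v) := hf.cons (v, false)
  have hcons1 : ∀ n : Node α, n ≠ nS α → n ≠ nT α → n ≠ vi v → n ≠ vo v →
      consAt (zeroed f (vi v) (vo v)) n := by
    rintro (p | b) hnS hnT hnvi hnvo
    · have hc := hf.cons p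
      rw [consAt] at hc
      rw [consAt, hin1, hout1, if_neg hnvo, if_neg hnvi]
      omega
    · cases b
      · exact absurd rfl hnS
      · exact absurd rfl hnT
  have hdef1 : inAt (zeroed f (vi v) (vo v)) (vo v) + 1 =
      outAt (zeroed f (vi v) (vo v)) (vo v) := by
    rw [hin1, hout1, if_pos rfl, if_neg (Ne.symm (vi_ne_vo v v))]
    rw [consAt] at hconsvov
    omega
  obtain ⟨Tf, g₁, hg₁le, hg₁cons, hTfgt, hTfchain, hg₁cov, hTfsub, hg₁nS, hg₁vi⟩ :=
    FWD (Finset.univ.filter (fun u => v < u)).card v (vi v) (zeroed f (vi v) (vo v))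
      (le_refl _)
      (fun a b => ⟨(hf₁le a b).1, le_trans (hf₁le a b).2 (hcap a b).2⟩)
      (fun a b hne => hf.supp a b (by have := hf₁le a b; omega))
      (fun u _ => vi_ne_vo v u)
      (fun u hu hc => (ne_of_gt hu) (vi_inj hc).symm)
      hcons1 hdef1
  have hcov1 : Cov (zeroed f (vi v) (vo v)) = Cov f \ {v} := cov_zeroed_diag f v
  have hg₁cap : ∀ a b, 0 ≤ g₁ a b ∧ g₁ a b ≤ 1 := by
    intro a b
    have h1 := hg₁le a b
    have h2 := hf₁le a b
    have h3 := hcap a b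
    exact ⟨h1.1, by omega⟩
  have hg₁supp : IsSupp g₁ := by
    intro a b hne
    have h1 := hg₁le a b
    have h2 := hf₁le a b
    exact hf.supp a b (by omega)
  have hg₁out : outAt g₁ (vi v) = 0 := by
    rw [outAt_vi hg₁supp]
    have h1 := hg₁le (vi v) (vo v)
    have h2 : zeroed f (vi v) (vo v) (vi v) (vo v) = 0 := zeroed_self f _ _
    omega
  have hg₁in : inAt g₁ (vi v) = 1 := by
    have he : inAt g₁ (vi v) = inAt (zeroed f (vi v) (vo v)) (vi v) := by
      rw [inAt, inAt]
      exact Finset.sum_congr rfl (fun m _ => hg₁vi v m (le_refl v))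
    rw [he, hin1, if_neg (vi_ne_vo v v)]
    rw [consAt, outAt_vi hf.supp] at hconsviv
    omega
  have hdef2 : outAt g₁ (vi v) + 1 = inAt g₁ (vi v) := by omega
  obtain ⟨Tb, g₂, hg₂le, hg₂cons, hTblt, hTbchain, hg₂cov, hTbsub, w₀, hw1, hw2, hw3⟩ :=
    BWD (Finset.univ.filter (fun u => u < v)).card v g₁ (le_refl _)
      hg₁cap hg₁supp hg₁cons hdef2
  -- the combined chain
  refine ⟨Tb ∪ insert v Tf, g₂, ?_, ?_, ?_, ?_, ?_, ?_⟩
  · refine ⟨?_, ?_, ?_⟩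
    · intro a b
      have h1 := hg₂le a b
      have h2 := hg₁cap a b
      exact ⟨h1.1, by omega⟩
    · intro a b hne
      have h1 := hg₂le a b
      exact hg₁supp a b (by omega)
    · intro p
      exact hg₂cons (Sum.inl p) (by simp [nS]) (by simp [nT])
  · -- chain
    intro x hx y hy hne
    simp only [Finset.coe_union, Finset.coe_insert, Set.mem_union, Set.mem_insert_iff,
      Finset.mem_coe] at hx hy
    have hTb : ∀ z, z ∈ Tb → z < v := fun z hz => hTblt z hz
    have hTf : ∀ z, z ∈ Tf → v < z := fun z hz => hTfgt z hz
    rcases hx with hx | rfl | hx <;> rcases hy with hy | rfl | hy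
    · exact hTbchain hx hy hne
    · exact Or.inl (hTb x hx).le
    · exact Or.inl ((hTb x hx).trans (hTf y hy)).le
    · exact Or.inr (hTb y hy).le
    · exact absurd rfl hne
    · exact Or.inl (hTf y hy).le
    · exact Or.inr ((hTb y hy).trans (hTf x hx)).le
    · exact Or.inr (hTf x hx).le
    · exact hTfchain hx hy hne
  · exact Finset.mem_union.2 (Or.inr (Finset.mem_insert_self v Tf))
  · rw [hg₂cov, hg₁cov, hcov1]
    ext x
    simp only [Finset.mem_sdiff, Finset.mem_singleton, Finset.mem_union, Finset.mem_insert]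
    tauto
  · intro x hx
    rcases Finset.mem_union.1 hx with hx | hx
    · have := hTbsub hx
      rw [hg₁cov, hcov1] at this
      exact ((Finset.mem_sdiff.1 (Finset.mem_sdiff.1 this).1).1)
    · rcases Finset.mem_insert.1 hx with rfl | hx'
      · exact hv
      · have := hTfsub hx'
        rw [hcov1] at this
        exact (Finset.mem_sdiff.1 this).1
  · -- value computation
    have hrow1 : ∀ m, zeroed f (vi v) (vo v) (nS α) m = f (nS α) m :=
      fun m => zeroed_ne f (fun hc => vi_ne_nS v hc.1.symm)
    have hv1 : value g₁ = value f := by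
      rw [value, value, outAt, outAt]
      exact Finset.sum_congr rfl (fun m _ => by rw [hg₁nS m, hrow1 m])
    have hsum : value g₂ = value g₁ - 1 := by
      rw [value, value, outAt, outAt]
      have he : ∀ m, g₂ (nS α) m = g₁ (nS α) m - (if m = vi w₀ then 1 else 0) := by
        intro m
        by_cases hm : m = vi w₀
        · subst hm
          rw [if_pos rfl, hw1, hw2]
          norm_num
        · rw [if_neg hm, hw3 m hm]
          ring
      rw [Finset.sum_congr rfl (fun m _ => he m), Finset.sum_sub_distrib]
      rw [Finset.sum_ite_eq' Finset.univ (vi w₀) (fun _ => (1:ℤ))]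
      simp
    omega

/-- From a flow of value at most `k`, produce `k` chains covering `Cov f`. -/
lemma chains_of_flow : ∀ (k : ℕ) (f : Node α → Node α → ℤ), IsFlow f →
    value f ≤ k →
    ∃ C : Fin k → Finset α, (∀ j, IsChain (· ≤ ·) ((C j : Set α))) ∧
      Finset.univ.biUnion C = Cov f := by
  intro k
  induction k with
  | zero =>
    intro f hf hval
    have hcov : Cov f = ∅ := by
      by_contra hc
      obtain ⟨v, hv⟩ := Finset.nonempty_of_ne_empty hc
      obtain ⟨T, g, hg, -, -, -, -, hval2⟩ := extractChain f hf hv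
      have := value_nonneg hg.capped
      omega
    exact ⟨fun _ => ∅, fun j => by simp, by rw [hcov]; ext x; simp [Finset.mem_biUnion]⟩
  | succ k IH =>
    intro f hf hval
    by_cases hc : Cov f = ∅
    · exact ⟨fun _ => ∅, fun j => by simp, by rw [hc]; ext x; simp [Finset.mem_biUnion]⟩
    · obtain ⟨v, hv⟩ := Finset.nonempty_of_ne_empty hc
      obtain ⟨T, g, hg, hTchain, hvT, hgcov, hTsub, hval2⟩ := extractChain f hf hv
      obtain ⟨C', hC'chain, hC'cov⟩ := IH g hg (by push_cast at hval ⊢; omega)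
      refine ⟨Fin.cons T C', ?_, ?_⟩
      · intro j
        induction j using Fin.cases with
        | zero => simpa using hTchain
        | succ i => simpa using hC'chain i
      · have hsplit : Finset.univ.biUnion (Fin.cons T C') =
            T ∪ Finset.univ.biUnion C' := by
          ext x
          simp only [Finset.mem_biUnion, Finset.mem_univ, true_and, Finset.mem_union]
          constructor
          · rintro ⟨j, hj⟩
            induction j using Fin.cases with
            | zero => exact Or.inl (by simpa using hj)
            | succ i => exact Or.inr ⟨i, by simpa using hj⟩
          · rintro (hx | ⟨i, hi⟩)
            · exact ⟨0, by simpa using hx⟩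
            · exact ⟨i.succ, by simpa using hi⟩
        rw [hsplit, hC'cov, hgcov]
        exact Finset.union_sdiff_of_subset hTsub

/-- The exchange step. -/
lemma exchange (k : ℕ) (f g : Node α → Node α → ℤ) (hf : IsFlow f) (hg : IsFlow g)
    (hvf : value f ≤ (k:ℤ) + 1) (hvg : value g ≤ (k:ℤ) - 1) :
    ∃ f' g' : Node α → Node α → ℤ, IsFlow f' ∧ IsFlow g' ∧
      value f' ≤ (k:ℤ) ∧ value g' ≤ (k:ℤ) ∧
      profit f' + profit g' = profit f + profit g := by
  by_cases hle : value f ≤ (k:ℤ)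
  · exact ⟨f, g, hf, hg, hle, by omega, rfl⟩
  · obtain ⟨f', g', hf', hg', hv1, hv2, hp⟩ := augment f g hf hg (by omega)
    exact ⟨f', g', hf', hg', by omega, by omega, hp⟩

end Greene

/-- `chainCoverNum α i` is `c_i`: the maximal number of vertices of the finite poset
`α` covered by a union of `i` chains. -/
noncomputable def chainCoverNum (α : Type*) [Fintype α] [PartialOrder α]
    [DecidableEq α] (i : ℕ) : ℕ :=
  sSup {m | ∃ C : Fin i → Finset α,
    (∀ j, IsChain (· ≤ ·) (↑(C j) : Set α)) ∧ (Finset.univ.biUnion C).card = m}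

section Main

open Greene

variable {α : Type*} [Fintype α] [PartialOrder α] [DecidableEq α]

lemma chainCoverNum_bddAbove (i : ℕ) :
    BddAbove {m | ∃ C : Fin i → Finset α,
      (∀ j, IsChain (· ≤ ·) (↑(C j) : Set α)) ∧ (Finset.univ.biUnion C).card = m} := by
  refine ⟨Fintype.card α, ?_⟩
  rintro m ⟨C, -, rfl⟩
  exact Finset.card_le_univ _

lemma chainCoverNum_nonempty (i : ℕ) :
    {m | ∃ C : Fin i → Finset α,
      (∀ j, IsChain (· ≤ ·) (↑(C j) : Set α)) ∧ (Finset.univ.biUnion C).card = m}.Nonempty := by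
  refine ⟨(Finset.univ.biUnion (fun _ : Fin i => (∅ : Finset α))).card, fun _ => ∅, fun j => by simp, rfl⟩

lemma chainCoverNum_mem (i : ℕ) :
    chainCoverNum α i ∈ {m | ∃ C : Fin i → Finset α,
      (∀ j, IsChain (· ≤ ·) (↑(C j) : Set α)) ∧ (Finset.univ.biUnion C).card = m} :=
  Nat.sSup_mem (chainCoverNum_nonempty i) (chainCoverNum_bddAbove i)

lemma le_chainCoverNum {i m : ℕ}
    (hm : m ∈ {m | ∃ C : Fin i → Finset α,
      (∀ j, IsChain (· ≤ ·) (↑(C j) : Set α)) ∧ (Finset.univ.biUnion C).card = m}) :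
    m ≤ chainCoverNum α i :=
  le_csSup (chainCoverNum_bddAbove i) hm

end Main

/-- Greene's concavity theorem: the chain-covering numbers `c_i` of a finite poset
satisfy `c_{i+1} - c_i ≤ c_i - c_{i-1}` for `i ≥ 1`, i.e.
`c_{i+1} + c_{i-1} ≤ 2 c_i`, so that `λ(D)` is a partition. -/
theorem chainCoverNum_concave (α : Type*) [Fintype α] [PartialOrder α]
    [DecidableEq α] :
    ∀ i : ℕ, 1 ≤ i →
      chainCoverNum α (i + 1) + chainCoverNum α (i - 1) ≤
        2 * chainCoverNum α i := by
  intro i hi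
  classical
  obtain ⟨C1, hC1, hc1⟩ := chainCoverNum_mem (α := α) (i + 1)
  obtain ⟨C2, hC2, hc2⟩ := chainCoverNum_mem (α := α) (i - 1)
  obtain ⟨f, hf, hvf, hcovf⟩ := Greene.exists_flow_of_chains C1 hC1
  obtain ⟨g, hg, hvg, hcovg⟩ := Greene.exists_flow_of_chains C2 hC2
  obtain ⟨f', g', hf', hg', hvf', hvg', hp⟩ := Greene.exchange i f g hf hg
    (by push_cast at hvf ⊢; omega)
    (by
      have : ((i - 1 : ℕ) : ℤ) = (i : ℤ) - 1 := by
        omega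
      omega)
  obtain ⟨D1, hD1, hD1cov⟩ := Greene.chains_of_flow i f' hf' hvf'
  obtain ⟨D2, hD2, hD2cov⟩ := Greene.chains_of_flow i g' hg' hvg'
  have h1 : (Finset.univ.biUnion D1).card ≤ chainCoverNum α i :=
    le_chainCoverNum ⟨D1, hD1, rfl⟩
  have h2 : (Finset.univ.biUnion D2).card ≤ chainCoverNum α i :=
    le_chainCoverNum ⟨D2, hD2, rfl⟩
  have hpf : Greene.profit f = (chainCoverNum α (i+1) : ℤ) := by
    rw [Greene.profit_eq_card_cov hf.capped, hcovf, hc1]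
  have hpg : Greene.profit g = (chainCoverNum α (i-1) : ℤ) := by
    rw [Greene.profit_eq_card_cov hg.capped, hcovg, hc2]
  have hpf' : Greene.profit f' = ((Finset.univ.biUnion D1).card : ℤ) := by
    rw [Greene.profit_eq_card_cov hf'.capped, hD1cov]
  have hpg' : Greene.profit g' = ((Finset.univ.biUnion D2).card : ℤ) := by
    rw [Greene.profit_eq_card_cov hg'.capped, hD2cov]
  have := hp
  rw [hpf, hpg, hpf', hpg'] at this
  omega
end
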